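/- arXiv:1605.06396 — 4 statements merged into one kernel-verified Lean document; each statement's English description precedes it below -/
import Mathlib

section
/- For any input distribution Q_X, channel Q_{Y|X}, and rate R > I(X;Y), where X and Y have finite supports, there exist constants γ₁ > 0 and γ₂ > 0 such that for all sufficiently large n, the probability (over the random i.i.d. codebook 𝒞 of size 2^{nR}) that the total variation distance ‖P_{Y^n|𝒞} − Q_{Y^n}‖_TV exceeds e^{−γ₁ n} is at most e^{−e^{γ₂ n}}. -/
open Finset Real
open scoped BigOperators Classical

noncomputable section SoftCovering

/-- `p` is a probability mass function on the finite type `α`. -/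
def IsPMF {α : Type*} [Fintype α] (p : α → ℝ) : Prop :=
  (∀ a, 0 ≤ p a) ∧ ∑ a, p a = 1

variable {𝒳 𝒴 : Type*} [Fintype 𝒳] [Fintype 𝒴]

/-- The output distribution `Q_Y` on `𝒴` induced by the input distribution `Q_X`
and the channel `Q_{Y|X}`. -/
def outDist (QX : 𝒳 → ℝ) (QYX : 𝒳 → 𝒴 → ℝ) (y : 𝒴) : ℝ := ∑ x, QX x * QYX x y

/-- The `n`-fold i.i.d. product of a distribution `p`. -/
def prodDist {α : Type*} [Fintype α] (p : α → ℝ) (n : ℕ) (xs : Fin n → α) : ℝ :=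
  ∏ i, p (xs i)

/-- The `n`-fold memoryless channel: `Q_{Y^n|X^n = xs}(ys)`. -/
def chanProd (QYX : 𝒳 → 𝒴 → ℝ) (n : ℕ) (xs : Fin n → 𝒳) (ys : Fin n → 𝒴) : ℝ :=
  ∏ i, QYX (xs i) (ys i)

/-- The information density `ı_{X;Y}(x;y) = log₂ (Q_{Y|X}(y|x) / Q_Y(y))`, in bits. -/
def infoDensity (QX : 𝒳 → ℝ) (QYX : 𝒳 → 𝒴 → ℝ) (x : 𝒳) (y : 𝒴) : ℝ :=
  Real.logb 2 (QYX x y / outDist QX QYX y)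

/-- The mutual information `I(X;Y)` of `(X,Y) ~ Q_X Q_{Y|X}`, in bits. -/
def mutualInfo (QX : 𝒳 → ℝ) (QYX : 𝒳 → 𝒴 → ℝ) : ℝ :=
  ∑ x, ∑ y, QX x * QYX x y * infoDensity QX QYX x y

/-- The variance `V` of the information density under `(X,Y) ~ Q_X Q_{Y|X}`. -/
def infoVar (QX : 𝒳 → ℝ) (QYX : 𝒳 → 𝒴 → ℝ) : ℝ :=
  ∑ x, ∑ y, QX x * QYX x y * (infoDensity QX QYX x y - mutualInfo QX QYX) ^ 2

/-- The centered third absolute moment `ρ` of the information density. -/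
def infoThird (QX : 𝒳 → ℝ) (QYX : 𝒳 → 𝒴 → ℝ) : ℝ :=
  ∑ x, ∑ y, QX x * QYX x y * |infoDensity QX QYX x y - mutualInfo QX QYX| ^ 3

/-- The Rényi divergence of order `a` between `Q_{X,Y} = Q_X Q_{Y|X}` and the product
of its marginals `Q_X Q_Y`, in bits. -/
def renyiDiv (QX : 𝒳 → ℝ) (QYX : 𝒳 → 𝒴 → ℝ) (a : ℝ) : ℝ :=
  (a - 1)⁻¹ * Real.logb 2 (∑ x, ∑ y,
    (QX x * QYX x y) ^ a * (QX x * outDist QX QYX y) ^ (1 - a))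

/-- Membership in the jointly typical set
`𝒜_ε = {(x^n,y^n) : (1/n) log₂ (Q_{Y^n|X^n=x^n}(y^n)/Q_{Y^n}(y^n)) ≤ I(X;Y) + ε}`. -/
def JTypical (QX : 𝒳 → ℝ) (QYX : 𝒳 → 𝒴 → ℝ) (n : ℕ) (ε : ℝ)
    (xs : Fin n → 𝒳) (ys : Fin n → 𝒴) : Prop :=
  (n : ℝ)⁻¹ * Real.logb 2 (chanProd QYX n xs ys / prodDist (outDist QX QYX) n ys)
    ≤ mutualInfo QX QYX + ε

/-- The probability that `(X^n, Y^n) ~ Q_{X^n} Q_{Y^n|X^n}` is outside `𝒜_ε`. -/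
def atypProb (QX : 𝒳 → ℝ) (QYX : 𝒳 → 𝒴 → ℝ) (n : ℕ) (ε : ℝ) : ℝ :=
  ∑ xs : Fin n → 𝒳, ∑ ys : Fin n → 𝒴,
    if ¬ JTypical QX QYX n ε xs ys then prodDist QX n xs * chanProd QYX n xs ys else 0

/-- The induced output distribution `P_{Y^n|C} = 2^{-nR} ∑_m Q_{Y^n|X^n = x^n(m)}`
of a codebook `C` of size `M = 2^{nR}` (so `2^{-nR} = 1/M`). -/
def inducedDist (QYX : 𝒳 → 𝒴 → ℝ) (n M : ℕ) (C : Fin M → Fin n → 𝒳)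
    (ys : Fin n → 𝒴) : ℝ :=
  (M : ℝ)⁻¹ * ∑ m, chanProd QYX n (C m) ys

/-- The typical part `P_{C,1}(y^n) = 2^{-nR} ∑_m Q_{Y^n|X^n=x^n(m)}(y^n) 1{(x^n(m),y^n) ∈ 𝒜_ε}`. -/
def Ptyp (QX : 𝒳 → ℝ) (QYX : 𝒳 → 𝒴 → ℝ) (n M : ℕ) (ε : ℝ)
    (C : Fin M → Fin n → 𝒳) (ys : Fin n → 𝒴) : ℝ :=
  (M : ℝ)⁻¹ * ∑ m, if JTypical QX QYX n ε (C m) ys then chanProd QYX n (C m) ys else 0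

/-- The atypical part `P_{C,2}(y^n) = 2^{-nR} ∑_m Q_{Y^n|X^n=x^n(m)}(y^n) 1{(x^n(m),y^n) ∉ 𝒜_ε}`. -/
def Patyp (QX : 𝒳 → ℝ) (QYX : 𝒳 → 𝒴 → ℝ) (n M : ℕ) (ε : ℝ)
    (C : Fin M → Fin n → 𝒳) (ys : Fin n → 𝒴) : ℝ :=
  (M : ℝ)⁻¹ * ∑ m, if ¬ JTypical QX QYX n ε (C m) ys then chanProd QYX n (C m) ys else 0

/-- The density `D_{C,1}(y^n) = P_{C,1}(y^n)/Q_{Y^n}(y^n)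
= 2^{-nR} ∑_m (Q_{Y^n|X^n=x^n(m)}(y^n)/Q_{Y^n}(y^n)) 1{(x^n(m),y^n) ∈ 𝒜_ε}`. -/
def Dtyp (QX : 𝒳 → ℝ) (QYX : 𝒳 → 𝒴 → ℝ) (n M : ℕ) (ε : ℝ)
    (C : Fin M → Fin n → 𝒳) (ys : Fin n → 𝒴) : ℝ :=
  (M : ℝ)⁻¹ * ∑ m, if JTypical QX QYX n ε (C m) ys then
    chanProd QYX n (C m) ys / prodDist (outDist QX QYX) n ys else 0

/-- Total variation distance `(1/2) ∑_y |P y - Q y|` on a finite type. -/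
def tvDist {β : Type*} [Fintype β] (P Q : β → ℝ) : ℝ := (1 / 2) * ∑ y, |P y - Q y|

/-- Probability of an event `E` over the random codebook of `M` codewords drawn
i.i.d. from `Q_{X^n}`. -/
def cbProb (QX : 𝒳 → ℝ) (n M : ℕ) (E : (Fin M → Fin n → 𝒳) → Prop) : ℝ :=
  ∑ C : Fin M → Fin n → 𝒳, if E C then ∏ m, prodDist QX n (C m) else 0

/-- `𝒬(x)`: one minus the standard normal cumulative distribution function. -/
def gaussQ (x : ℝ) : ℝ :=
  (Real.sqrt (2 * Real.pi))⁻¹ * ∫ t in Set.Ioi x, Real.exp (-(t ^ 2 / 2))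

/-- `𝒬⁻¹`, the inverse of `𝒬`. -/
def gaussQInv : ℝ → ℝ := Function.invFun gaussQ


namespace SCAux

open Finset

private lemma sum_fun_prod {ι κ : Type*} [DecidableEq ι] [Fintype ι] [Fintype κ] (g : ι → κ → ℝ) :
    ∑ f : ι → κ, ∏ i, g i (f i) = ∏ i, ∑ j, g i j := by
  rw [← Fintype.piFinset_univ, Finset.sum_prod_piFinset]

private lemma isPMF_prodDist {α : Type*} [Fintype α] {p : α → ℝ} (hp : IsPMF p) (n : ℕ) :
    IsPMF (prodDist p n) := by
  constructor
  · intro xs; exact Finset.prod_nonneg fun i _ => hp.1 _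
  · rw [show (∑ xs : Fin n → α, prodDist p n xs) = ∑ xs : Fin n → α, ∏ i, p (xs i) from rfl,
      sum_fun_prod fun _ a => p a]
    simp [hp.2]

private lemma sum_chanProd {𝒳 𝒴 : Type*} [Fintype 𝒳] [Fintype 𝒴]
    {QYX : 𝒳 → 𝒴 → ℝ} (h : ∀ x, IsPMF (QYX x)) (n : ℕ) (xs : Fin n → 𝒳) :
    ∑ ys : Fin n → 𝒴, chanProd QYX n xs ys = 1 := by
  rw [show (∑ ys : Fin n → 𝒴, chanProd QYX n xs ys)
      = ∑ ys : Fin n → 𝒴, ∏ i, QYX (xs i) (ys i) from rfl,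
    sum_fun_prod fun i y => QYX (xs i) y]
  simp [(h _).2]

private lemma isPMF_outDist {𝒳 𝒴 : Type*} [Fintype 𝒳] [Fintype 𝒴]
    {QX : 𝒳 → ℝ} {QYX : 𝒳 → 𝒴 → ℝ} (hQX : IsPMF QX)
    (hQYX : ∀ x, IsPMF (QYX x)) : IsPMF (outDist QX QYX) := by
  constructor
  · intro y; exact Finset.sum_nonneg fun x _ => mul_nonneg (hQX.1 x) ((hQYX x).1 y)
  · rw [show (∑ y, outDist QX QYX y) = ∑ y : 𝒴, ∑ x : 𝒳, QX x * QYX x y from rfl,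
      Finset.sum_comm]
    have h1 : ∀ x : 𝒳, ∑ y : 𝒴, QX x * QYX x y = QX x := fun x => by
      rw [← Finset.mul_sum, (hQYX x).2, mul_one]
    simp only [h1]
    exact hQX.2

private lemma sum_prod_chan {𝒳 𝒴 : Type*} [Fintype 𝒳] [Fintype 𝒴]
    (QX : 𝒳 → ℝ) (QYX : 𝒳 → 𝒴 → ℝ) (n : ℕ) (ys : Fin n → 𝒴) :
    ∑ xs : Fin n → 𝒳, prodDist QX n xs * chanProd QYX n xs ys
      = prodDist (outDist QX QYX) n ys := by
  have h1 : ∀ xs : Fin n → 𝒳, prodDist QX n xs * chanProd QYX n xs ys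
      = ∏ i, QX (xs i) * QYX (xs i) (ys i) := fun xs => (Finset.prod_mul_distrib).symm
  simp only [h1]
  rw [sum_fun_prod fun i x => QX x * QYX x (ys i)]
  rfl

private lemma quad_le_exp {x : ℝ} (hx : 0 ≤ x) : 1 + x + x ^ 2 / 4 ≤ Real.exp x := by
  have h1 := Real.add_one_le_exp (x / 2)
  have h2 : Real.exp x = Real.exp (x / 2) * Real.exp (x / 2) := by
    rw [← Real.exp_add]; ring_nf
  nlinarith [Real.exp_pos (x / 2)]

private lemma exp_le_quad {u : ℝ} (h0 : 0 ≤ u) (h1 : u ≤ 1) : Real.exp u ≤ 1 + u + u ^ 2 := by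
  have h := Real.exp_bound (x := u) (by rwa [abs_of_nonneg h0]) (n := 2) (by norm_num)
  have h2 : |u| ^ 2 * ((2 : ℕ).succ / ((2 : ℕ).factorial * (2 : ℕ)) : ℝ) = u ^ 2 * (3 / 4) := by
    rw [abs_of_nonneg h0]; norm_num [Nat.factorial]
  rw [h2] at h
  have h3 : ∑ i ∈ Finset.range 2, u ^ i / (i.factorial : ℝ) = 1 + u := by
    norm_num [Finset.sum_range_succ, Nat.factorial]
  rw [h3] at h
  have := abs_le.mp h
  nlinarith [sq_nonneg u]


private lemma chernoff {X : Type*} [Fintype X] (w : X → ℝ) (hw : ∀ x, 0 ≤ w x)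
    (hw1 : ∑ x, w x = 1) (g : X → ℝ) (b : ℝ) (hb : 0 < b)
    (hg0 : ∀ x, 0 ≤ g x) (hgb : ∀ x, g x ≤ b)
    (hμ1 : ∑ x, w x * g x ≤ 1) {δ t : ℝ} (hδ0 : 0 < δ) (hδ2 : δ ≤ 2)
    (ht : ∑ x, w x * g x + δ ≤ t) (M : ℕ) :
    (∑ C : Fin M → X, if (M : ℝ) * t < ∑ m, g (C m) then ∏ m, w (C m) else 0)
      ≤ Real.exp (-((M : ℝ) * δ ^ 2 / (4 * b))) := by
  classical
  set μ := ∑ x, w x * g x with hμdef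
  have hμ0 : 0 ≤ μ := Finset.sum_nonneg fun x _ => mul_nonneg (hw x) (hg0 x)
  set s := δ / (2 * b) with hs
  have hs0 : 0 < s := div_pos hδ0 (by linarith)
  have hsb : s * b = δ / 2 := by
    rw [hs]; field_simp
  -- pointwise bound by the exponential
  have hpt : ∀ C : Fin M → X,
      (if (M : ℝ) * t < ∑ m, g (C m) then ∏ m, w (C m) else 0)
        ≤ Real.exp (s * ((∑ m, g (C m)) - (M : ℝ) * t)) * ∏ m, w (C m) := by
    intro C
    have hwp : 0 ≤ ∏ m, w (C m) := Finset.prod_nonneg fun m _ => hw _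
    by_cases h : (M : ℝ) * t < ∑ m, g (C m)
    · rw [if_pos h]
      have h1 : (1 : ℝ) ≤ Real.exp (s * ((∑ m, g (C m)) - (M : ℝ) * t)) := by
        rw [← Real.exp_zero]
        exact Real.exp_le_exp.mpr (by nlinarith)
      exact le_mul_of_one_le_left hwp h1
    · rw [if_neg h]; positivity
  have hsum : ∑ C : Fin M → X, Real.exp (s * ((∑ m, g (C m)) - (M : ℝ) * t)) * ∏ m, w (C m)
      = Real.exp (-(s * ((M : ℝ) * t))) * (∑ x, Real.exp (s * g x) * w x) ^ M := by
    have h1 : ∀ C : Fin M → X,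
        Real.exp (s * ((∑ m, g (C m)) - (M : ℝ) * t)) * ∏ m, w (C m)
          = Real.exp (-(s * ((M : ℝ) * t))) * ∏ m, Real.exp (s * g (C m)) * w (C m) := by
      intro C
      have h2 : s * ((∑ m, g (C m)) - (M : ℝ) * t)
          = (∑ m, s * g (C m)) + -(s * ((M : ℝ) * t)) := by
        rw [← Finset.mul_sum]; ring
      rw [h2, Real.exp_add, Real.exp_sum, Finset.prod_mul_distrib]
      ring
    simp only [h1]
    rw [← Finset.mul_sum, sum_fun_prod fun (_ : Fin M) x => Real.exp (s * g x) * w x]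
    rw [Finset.prod_const, Finset.card_univ, Fintype.card_fin]
  have hA : ∑ x, Real.exp (s * g x) * w x ≤ Real.exp (s * μ * (1 + s * b)) := by
    have h1 : ∑ x, Real.exp (s * g x) * w x
        ≤ ∑ x, (w x + s * (w x * g x) + s ^ 2 * b * (w x * g x)) := by
      apply Finset.sum_le_sum
      intro x _
      have hu0 : 0 ≤ s * g x := mul_nonneg hs0.le (hg0 x)
      have hu1 : s * g x ≤ 1 := by nlinarith [hgb x, hg0 x]
      have h2 : Real.exp (s * g x) ≤ 1 + s * g x + (s * g x) ^ 2 := exp_le_quad hu0 hu1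
      have h3 : (s * g x) ^ 2 * w x ≤ s ^ 2 * b * (w x * g x) := by
        have h3a : g x * (g x * w x) ≤ b * (g x * w x) :=
          mul_le_mul_of_nonneg_right (hgb x) (mul_nonneg (hg0 x) (hw x))
        nlinarith [mul_le_mul_of_nonneg_left h3a (sq_nonneg s)]
      nlinarith [hw x, mul_le_mul_of_nonneg_right h2 (hw x)]
    have h2 : ∑ x, (w x + s * (w x * g x) + s ^ 2 * b * (w x * g x))
        = 1 + s * μ + s ^ 2 * b * μ := by
      rw [Finset.sum_add_distrib, Finset.sum_add_distrib, hw1, ← Finset.mul_sum,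
        ← Finset.mul_sum, ← hμdef]
    have h3 : 1 + s * μ + s ^ 2 * b * μ ≤ Real.exp (s * μ * (1 + s * b)) := by
      have h4 := Real.add_one_le_exp (s * μ * (1 + s * b))
      nlinarith []
    linarith [h1.trans_eq h2]
  have hAnn : 0 ≤ ∑ x, Real.exp (s * g x) * w x :=
    Finset.sum_nonneg fun x _ => mul_nonneg (Real.exp_pos _).le (hw x)
  calc (∑ C : Fin M → X, if (M : ℝ) * t < ∑ m, g (C m) then ∏ m, w (C m) else 0)
      ≤ ∑ C : Fin M → X, Real.exp (s * ((∑ m, g (C m)) - (M : ℝ) * t)) * ∏ m, w (C m) :=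
        Finset.sum_le_sum fun C _ => hpt C
    _ = Real.exp (-(s * ((M : ℝ) * t))) * (∑ x, Real.exp (s * g x) * w x) ^ M := hsum
    _ ≤ Real.exp (-(s * ((M : ℝ) * t))) * Real.exp (s * μ * (1 + s * b)) ^ M := by
        exact mul_le_mul_of_nonneg_left (pow_le_pow_left₀ hAnn hA M) (Real.exp_pos _).le
    _ = Real.exp (-(s * ((M : ℝ) * t)) + (M : ℝ) * (s * μ * (1 + s * b))) := by
        rw [← Real.exp_nat_mul, ← Real.exp_add]
    _ ≤ Real.exp (-((M : ℝ) * δ ^ 2 / (4 * b))) := by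
        apply Real.exp_le_exp.mpr
        have hM0 : (0 : ℝ) ≤ (M : ℝ) := Nat.cast_nonneg M
        have key : s * μ * (1 + s * b) - s * t ≤ -(δ ^ 2 / (4 * b)) := by
          have h5 : s * μ * (1 + s * b) - s * t ≤ s * μ * (1 + s * b) - s * (μ + δ) :=
            by nlinarith [hs0.le]
          have h6 : s * μ * (1 + s * b) - s * (μ + δ) = s * (μ * (s * b) - δ) := by ring
          have h7 : μ * (s * b) ≤ δ / 2 := by rw [hsb]; nlinarith
          have h8 : s * (μ * (s * b) - δ) ≤ s * (-(δ / 2)) := by nlinarith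
          have h9 : s * (-(δ / 2)) = -(δ ^ 2 / (4 * b)) := by rw [hs]; field_simp; ring
          linarith
        have h10 : -(s * ((M : ℝ) * t)) + (M : ℝ) * (s * μ * (1 + s * b))
            = (M : ℝ) * (s * μ * (1 + s * b) - s * t) := by ring
        have h11 := mul_le_mul_of_nonneg_left key hM0
        have h12 : (M : ℝ) * -(δ ^ 2 / (4 * b)) = -((M : ℝ) * δ ^ 2 / (4 * b)) := by ring
        linarith

private lemma mutualInfo_nonneg {𝒳 𝒴 : Type*} [Fintype 𝒳] [Fintype 𝒴]
    {QX : 𝒳 → ℝ} {QYX : 𝒳 → 𝒴 → ℝ} (hQX : IsPMF QX)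
    (hQYX : ∀ x, IsPMF (QYX x)) : 0 ≤ mutualInfo QX QYX := by
  have hQY := isPMF_outDist hQX hQYX
  have key : ∀ x y, QX x * QYX x y - QX x * outDist QX QYX y
      ≤ QX x * QYX x y * Real.log (QYX x y / outDist QX QYX y) := by
    intro x y
    rcases eq_or_lt_of_le (mul_nonneg (hQX.1 x) ((hQYX x).1 y)) with h | h
    · have h0 : QX x * QYX x y = 0 := h.symm
      rw [h0, zero_sub, zero_mul]
      exact neg_nonpos.mpr (mul_nonneg (hQX.1 x) (hQY.1 y))
    · have hx0 : 0 < QX x ∧ 0 < QYX x y := by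
        rcases mul_pos_iff.mp h with h1 | h1
        · exact h1
        · exact absurd h1.1 (not_lt.mpr (hQX.1 x))
      have hQYpos : 0 < outDist QX QYX y := by
        have h2 : QX x * QYX x y ≤ outDist QX QYX y :=
          Finset.single_le_sum (f := fun x => QX x * QYX x y)
            (fun i _ => mul_nonneg (hQX.1 i) ((hQYX i).1 y)) (Finset.mem_univ x)
        linarith
      have hlog := Real.log_le_sub_one_of_pos
        (div_pos hQYpos hx0.2 : 0 < outDist QX QYX y / QYX x y)
      have hlogeq : Real.log (outDist QX QYX y / QYX x y)
          = - Real.log (QYX x y / outDist QX QYX y) := by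
        rw [Real.log_div hQYpos.ne' hx0.2.ne', Real.log_div hx0.2.ne' hQYpos.ne']; ring
      rw [hlogeq] at hlog
      -- from hlog : -log r ≤ Q/q - 1
      have hmul := mul_le_mul_of_nonneg_left hlog h.le
      have hident : QX x * QYX x y * (outDist QX QYX y / QYX x y - 1)
          = QX x * outDist QX QYX y - QX x * QYX x y := by
        have hq : QYX x y ≠ 0 := hx0.2.ne'
        field_simp
      nlinarith [hmul, hident]
  have hsumkey : (0:ℝ) ≤ ∑ x, ∑ y, QX x * QYX x y * Real.log (QYX x y / outDist QX QYX y) := by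
    have h1 : ∑ x, ∑ y, (QX x * QYX x y - QX x * outDist QX QYX y) = 0 := by
      have h2 : ∀ x : 𝒳, ∑ y, (QX x * QYX x y - QX x * outDist QX QYX y) = 0 := by
        intro x
        rw [Finset.sum_sub_distrib, ← Finset.mul_sum, ← Finset.mul_sum, (hQYX x).2, hQY.2]
        ring
      simp [h2]
    calc (0:ℝ) = ∑ x, ∑ y, (QX x * QYX x y - QX x * outDist QX QYX y) := h1.symm
      _ ≤ _ := Finset.sum_le_sum fun x _ => Finset.sum_le_sum fun y _ => key x y
  have hexpand : mutualInfo QX QYX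
      = (∑ x, ∑ y, QX x * QYX x y * Real.log (QYX x y / outDist QX QYX y)) / Real.log 2 := by
    unfold mutualInfo infoDensity Real.logb
    rw [Finset.sum_div]
    congr 1; funext x
    rw [Finset.sum_div]
    congr 1; funext y
    ring
  rw [hexpand]
  exact div_nonneg hsumkey (Real.log_nonneg one_le_two)

private lemma cbProb_le_sum {𝒳 : Type*} [Fintype 𝒳] {ι : Type*} [Fintype ι]
    (QX : 𝒳 → ℝ) (hQX0 : ∀ x, 0 ≤ QX x) (n M : ℕ)
    (E : (Fin M → Fin n → 𝒳) → Prop) (F : ι → (Fin M → Fin n → 𝒳) → Prop)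
    (h : ∀ C, 0 < ∏ m, prodDist QX n (C m) → E C → ∃ i, F i C) :
    cbProb QX n M E ≤ ∑ i, cbProb QX n M (F i) := by
  classical
  unfold cbProb
  rw [Finset.sum_comm]
  apply Finset.sum_le_sum
  intro C _
  have hwnn : 0 ≤ ∏ m, prodDist QX n (C m) :=
    Finset.prod_nonneg fun m _ => Finset.prod_nonneg fun i _ => hQX0 _
  have hRnn : (0:ℝ) ≤ ∑ i : ι, if F i C then ∏ m, prodDist QX n (C m) else 0 :=
    Finset.sum_nonneg fun i _ => by split <;> simp [hwnn]
  by_cases hE : E C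
  · rw [if_pos hE]
    rcases eq_or_lt_of_le hwnn with hw0 | hw0
    · rw [← hw0]; simp
    · obtain ⟨i, hi⟩ := h C hw0 hE
      refine le_trans ?_ (Finset.single_le_sum
        (f := fun i => if F i C then ∏ m, prodDist QX n (C m) else 0)
        (fun i _ => by by_cases hF : F i C <;> simp [hF, hwnn]) (Finset.mem_univ i))
      rw [if_pos hi]
  · rw [if_neg hE]; exact hRnn

private lemma cbProb_mono {𝒳 : Type*} [Fintype 𝒳]
    (QX : 𝒳 → ℝ) (hQX0 : ∀ x, 0 ≤ QX x) (n M : ℕ)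
    (E F : (Fin M → Fin n → 𝒳) → Prop) (h : ∀ C, E C → F C) :
    cbProb QX n M E ≤ cbProb QX n M F := by
  unfold cbProb
  apply Finset.sum_le_sum
  intro C _
  have hwnn : 0 ≤ ∏ m, prodDist QX n (C m) :=
    Finset.prod_nonneg fun m _ => Finset.prod_nonneg fun i _ => hQX0 _
  by_cases hE : E C
  · rw [if_pos hE, if_pos (h C hE)]
  · rw [if_neg hE]; split <;> simp [hwnn]

private lemma cbProb_nonneg {𝒳 : Type*} [Fintype 𝒳]
    (QX : 𝒳 → ℝ) (hQX0 : ∀ x, 0 ≤ QX x) (n M : ℕ)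
    (E : (Fin M → Fin n → 𝒳) → Prop) : 0 ≤ cbProb QX n M E := by
  apply Finset.sum_nonneg
  intro C _
  have hwnn : 0 ≤ ∏ m, prodDist QX n (C m) :=
    Finset.prod_nonneg fun m _ => Finset.prod_nonneg fun i _ => hQX0 _
  split <;> simp [hwnn]

private lemma linear_le_exp {a b c : ℝ} (hc : 0 < c) :
    ∃ N : ℕ, ∀ n : ℕ, N ≤ n → a + b * n ≤ Real.exp (c * n) := by
  refine ⟨max 1 ⌈4 * (|a| + |b|) / c ^ 2⌉₊, fun n hn => ?_⟩
  have hn1 : (1:ℝ) ≤ (n:ℝ) := by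
    have := le_trans (le_max_left 1 _) hn
    exact_mod_cast this
  have hn0 : (0:ℝ) ≤ (n:ℝ) := by linarith
  have hn2 : 4 * (|a| + |b|) / c ^ 2 ≤ (n:ℝ) := by
    refine le_trans (Nat.le_ceil _) ?_
    exact_mod_cast le_trans (le_max_right 1 _) hn
  have h4 : 4 * (|a| + |b|) ≤ c ^ 2 * n := by
    rw [div_le_iff₀ (by positivity)] at hn2
    linarith [hn2]
  have hq := quad_le_exp (mul_nonneg hc.le hn0)
  have h5 : 4 * (|a| + |b|) * (n:ℝ) ≤ c ^ 2 * n * n :=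
    mul_le_mul_of_nonneg_right h4 hn0
  have h6 : |a| + |b| * n ≤ (|a| + |b|) * n := by
    nlinarith [abs_nonneg a, abs_nonneg b]
  nlinarith [le_abs_self a, le_abs_self b, abs_nonneg a, abs_nonneg b]

private lemma typ_bound {𝒳 𝒴 : Type*} [Fintype 𝒳] [Fintype 𝒴]
    {QX : 𝒳 → ℝ} {QYX : 𝒳 → 𝒴 → ℝ} (hQX : IsPMF QX)
    (hQYX : ∀ x, IsPMF (QYX x)) {n M : ℕ} (hn : 0 < n) (hM : 0 < M) {ε δ : ℝ}
    (hδ0 : 0 < δ) (hδ2 : δ ≤ 2) (ys : Fin n → 𝒴)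
    (hy : 0 < prodDist (outDist QX QYX) n ys) :
    cbProb QX n M (fun C => 1 + δ < Dtyp QX QYX n M ε C ys)
      ≤ Real.exp (-((M:ℝ) * δ ^ 2
          / (4 * (2:ℝ) ^ ((n:ℝ) * (mutualInfo QX QYX + ε))))) := by
  classical
  set Q := prodDist (outDist QX QYX) n ys with hQdef
  set b : ℝ := (2:ℝ) ^ ((n:ℝ) * (mutualInfo QX QYX + ε)) with hbdef
  have hb : 0 < b := Real.rpow_pos_of_pos two_pos _
  set g : (Fin n → 𝒳) → ℝ := fun xs =>
    if JTypical QX QYX n ε xs ys then chanProd QYX n xs ys / Q else 0 with hgdef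
  have hg0 : ∀ xs, 0 ≤ g xs := by
    intro xs
    simp only [hgdef]
    have : 0 ≤ chanProd QYX n xs ys / Q :=
      div_nonneg (Finset.prod_nonneg fun i _ => (hQYX _).1 _) hy.le
    split <;> simp [this]
  have hgb : ∀ xs, g xs ≤ b := by
    intro xs
    simp only [hgdef]
    by_cases hJ : JTypical QX QYX n ε xs ys
    · rw [if_pos hJ]
      set r := chanProd QYX n xs ys / Q with hrdef
      have hr0 : 0 ≤ r := div_nonneg (Finset.prod_nonneg fun i _ => (hQYX _).1 _) hy.le
      rcases eq_or_lt_of_le hr0 with h0 | h0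
      · rw [← h0]; exact hb.le
      · have hJ' : Real.logb 2 r ≤ (n:ℝ) * (mutualInfo QX QYX + ε) := by
          unfold JTypical at hJ
          have hn' : (0:ℝ) < (n:ℝ) := by exact_mod_cast hn
          rw [← hQdef, ← hrdef] at hJ
          calc Real.logb 2 r = (n:ℝ) * ((n:ℝ)⁻¹ * Real.logb 2 r) := by
                field_simp
            _ ≤ (n:ℝ) * (mutualInfo QX QYX + ε) :=
                mul_le_mul_of_nonneg_left hJ hn'.le
        calc r = (2:ℝ) ^ Real.logb 2 r := (Real.rpow_logb two_pos (by norm_num) h0).symm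
          _ ≤ b := Real.rpow_le_rpow_of_exponent_le one_le_two hJ'
    · rw [if_neg hJ]; exact hb.le
  have hμ1 : ∑ xs, prodDist QX n xs * g xs ≤ 1 := by
    have h1 : ∑ xs, prodDist QX n xs * g xs
        ≤ ∑ xs, prodDist QX n xs * (chanProd QYX n xs ys / Q) := by
      apply Finset.sum_le_sum
      intro xs _
      apply mul_le_mul_of_nonneg_left _ ((isPMF_prodDist hQX n).1 xs)
      simp only [hgdef]
      have : 0 ≤ chanProd QYX n xs ys / Q :=
        div_nonneg (Finset.prod_nonneg fun i _ => (hQYX _).1 _) hy.le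
      split
      · exact le_rfl
      · exact this
    have h2 : ∑ xs, prodDist QX n xs * (chanProd QYX n xs ys / Q) = 1 := by
      have h3 : ∀ xs : Fin n → 𝒳, prodDist QX n xs * (chanProd QYX n xs ys / Q)
          = prodDist QX n xs * chanProd QYX n xs ys / Q := fun xs => by ring
      simp only [h3]
      rw [← Finset.sum_div, sum_prod_chan, ← hQdef, div_self hy.ne']
    linarith [h1.trans_eq h2]
  have hmain := chernoff (prodDist QX n) (isPMF_prodDist hQX n).1 (isPMF_prodDist hQX n).2
    g b hb hg0 hgb hμ1 hδ0 hδ2 (le_refl (∑ xs, prodDist QX n xs * g xs + δ)) M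
  have hev : cbProb QX n M (fun C => 1 + δ < Dtyp QX QYX n M ε C ys)
      ≤ ∑ C : Fin M → Fin n → 𝒳,
        if (M:ℝ) * (∑ xs, prodDist QX n xs * g xs + δ) < ∑ m, g (C m)
          then ∏ m, prodDist QX n (C m) else 0 := by
    unfold cbProb
    apply Finset.sum_le_sum
    intro C _
    have hwnn : 0 ≤ ∏ m, prodDist QX n (C m) :=
      Finset.prod_nonneg fun m _ => (isPMF_prodDist hQX n).1 _
    by_cases hE : 1 + δ < Dtyp QX QYX n M ε C ys
    · rw [if_pos hE]
      have hDt : Dtyp QX QYX n M ε C ys = (M:ℝ)⁻¹ * ∑ m, g (C m) := by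
        unfold Dtyp
        simp only [hgdef, hQdef]
      have hMpos : (0:ℝ) < (M:ℝ) := by exact_mod_cast hM
      have hlt : (M:ℝ) * (1 + δ) < ∑ m, g (C m) := by
        rw [hDt] at hE
        have := mul_lt_mul_of_pos_left hE hMpos
        rwa [← mul_assoc, mul_inv_cancel₀ hMpos.ne', one_mul] at this
      have hlt2 : (M:ℝ) * (∑ xs, prodDist QX n xs * g xs + δ) < ∑ m, g (C m) := by
        refine lt_of_le_of_lt ?_ hlt
        apply mul_le_mul_of_nonneg_left _ hMpos.le
        linarith [hμ1]
      rw [if_pos hlt2]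
    · rw [if_neg hE]
      split <;> simp [hwnn]
  exact le_trans hev hmain

private lemma atyp_bound {𝒳 𝒴 : Type*} [Fintype 𝒳] [Fintype 𝒴]
    {QX : 𝒳 → ℝ} {QYX : 𝒳 → 𝒴 → ℝ} (hQX : IsPMF QX)
    (hQYX : ∀ x, IsPMF (QYX x)) {n M : ℕ} (hM : 0 < M) {ε δ τ : ℝ}
    (hδ0 : 0 < δ) (hδ2 : δ ≤ 2) (hτ : atypProb QX QYX n ε + δ ≤ τ) :
    cbProb QX n M (fun C => τ < ∑ ys, Patyp QX QYX n M ε C ys)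
      ≤ Real.exp (-((M:ℝ) * δ ^ 2 / (4 * 1))) := by
  classical
  set g : (Fin n → 𝒳) → ℝ := fun xs =>
    ∑ ys : Fin n → 𝒴, if ¬ JTypical QX QYX n ε xs ys then chanProd QYX n xs ys else 0
    with hgdef
  have hchan_nn : ∀ (xs : Fin n → 𝒳) (ys : Fin n → 𝒴), 0 ≤ chanProd QYX n xs ys :=
    fun xs ys => Finset.prod_nonneg fun i _ => (hQYX _).1 _
  have hg0 : ∀ xs, 0 ≤ g xs := by
    intro xs
    simp only [hgdef]
    apply Finset.sum_nonneg
    intro ys _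
    split <;> simp [hchan_nn xs ys]
  have hgb : ∀ xs, g xs ≤ 1 := by
    intro xs
    simp only [hgdef]
    calc (∑ ys : Fin n → 𝒴, if ¬ JTypical QX QYX n ε xs ys then chanProd QYX n xs ys else 0)
        ≤ ∑ ys : Fin n → 𝒴, chanProd QYX n xs ys := by
          apply Finset.sum_le_sum
          intro ys _
          split <;> simp [hchan_nn xs ys]
      _ = 1 := sum_chanProd hQYX n xs
  have hμ : ∑ xs, prodDist QX n xs * g xs = atypProb QX QYX n ε := by
    unfold atypProb
    apply Finset.sum_congr rfl
    intro xs _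
    simp only [hgdef]
    rw [Finset.mul_sum]
    apply Finset.sum_congr rfl
    intro ys _
    rw [mul_ite, mul_zero]
  have hμ1 : ∑ xs, prodDist QX n xs * g xs ≤ 1 := by
    rw [hμ]
    calc atypProb QX QYX n ε = ∑ xs, prodDist QX n xs * g xs := hμ.symm
      _ ≤ ∑ xs, prodDist QX n xs * 1 :=
          Finset.sum_le_sum fun xs _ =>
            mul_le_mul_of_nonneg_left (hgb xs) ((isPMF_prodDist hQX n).1 xs)
      _ = 1 := by simp [(isPMF_prodDist hQX n).2]
  have ht : ∑ xs, prodDist QX n xs * g xs + δ ≤ τ := by rw [hμ]; exact hτ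
  have hmain := chernoff (prodDist QX n) (isPMF_prodDist hQX n).1 (isPMF_prodDist hQX n).2
    g 1 one_pos hg0 hgb hμ1 hδ0 hδ2 ht M
  refine le_trans ?_ hmain
  unfold cbProb
  apply Finset.sum_le_sum
  intro C _
  have hwnn : 0 ≤ ∏ m, prodDist QX n (C m) :=
    Finset.prod_nonneg fun m _ => (isPMF_prodDist hQX n).1 _
  by_cases hE : τ < ∑ ys, Patyp QX QYX n M ε C ys
  · rw [if_pos hE]
    have hsum : ∑ ys, Patyp QX QYX n M ε C ys = (M:ℝ)⁻¹ * ∑ m, g (C m) := by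
      unfold Patyp
      rw [← Finset.mul_sum, Finset.sum_comm]
    have hMpos : (0:ℝ) < (M:ℝ) := by exact_mod_cast hM
    have hlt : (M:ℝ) * τ < ∑ m, g (C m) := by
      rw [hsum] at hE
      have := mul_lt_mul_of_pos_left hE hMpos
      rwa [← mul_assoc, mul_inv_cancel₀ hMpos.ne', one_mul] at this
    rw [if_pos hlt]
  · rw [if_neg hE]
    split <;> simp [hwnn]

private lemma tv_bound {𝒳 𝒴 : Type*} [Fintype 𝒳] [Fintype 𝒴]
    {QX : 𝒳 → ℝ} {QYX : 𝒳 → 𝒴 → ℝ} (hQX : IsPMF QX) (hQYX : ∀ x, IsPMF (QYX x))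
    {n M : ℕ} (hM : 0 < M) {ε δ : ℝ} (hδ : 0 ≤ δ) (C : Fin M → Fin n → 𝒳)
    (hC : 0 < ∏ m, prodDist QX n (C m))
    (htyp : ∀ ys, 0 < prodDist (outDist QX QYX) n ys → Dtyp QX QYX n M ε C ys ≤ 1 + δ)
    (hatyp : ∑ ys, Patyp QX QYX n M ε C ys ≤ δ) :
    tvDist (inducedDist QYX n M C) (prodDist (outDist QX QYX) n) ≤ 2 * δ := by
  classical
  have hQY := isPMF_outDist hQX hQYX
  have hQn := isPMF_prodDist hQY n
  have hchan_nn : ∀ (xs : Fin n → 𝒳) (ys : Fin n → 𝒴), 0 ≤ chanProd QYX n xs ys :=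
    fun xs ys => Finset.prod_nonneg fun i _ => (hQYX _).1 _
  have hMinv : (0:ℝ) ≤ ((M:ℝ))⁻¹ := inv_nonneg.mpr (Nat.cast_nonneg M)
  have hsplitP : ∀ ys, inducedDist QYX n M C ys
      = Ptyp QX QYX n M ε C ys + Patyp QX QYX n M ε C ys := by
    intro ys
    unfold inducedDist Ptyp Patyp
    rw [← mul_add, ← Finset.sum_add_distrib]
    congr 1
    apply Finset.sum_congr rfl
    intro m _
    by_cases hJ : JTypical QX QYX n ε (C m) ys <;> simp [hJ]
  have hP1nn : ∀ ys, 0 ≤ Ptyp QX QYX n M ε C ys := by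
    intro ys
    apply mul_nonneg hMinv
    apply Finset.sum_nonneg
    intro m _
    split <;> simp [hchan_nn (C m) ys]
  have hP2nn : ∀ ys, 0 ≤ Patyp QX QYX n M ε C ys := by
    intro ys
    apply mul_nonneg hMinv
    apply Finset.sum_nonneg
    intro m _
    split <;> simp [hchan_nn (C m) ys]
  have hQpos : ∀ m i, 0 < QX (C m i) := by
    intro m i
    rcases eq_or_lt_of_le (hQX.1 (C m i)) with h0 | h0
    · exfalso
      have h1 : prodDist QX n (C m) = 0 :=
        Finset.prod_eq_zero (Finset.mem_univ i) h0.symm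
      have h2 : (∏ m, prodDist QX n (C m)) = 0 :=
        Finset.prod_eq_zero (Finset.mem_univ m) h1
      rw [h2] at hC; exact lt_irrefl 0 hC
    · exact h0
  have hP1zero : ∀ ys, prodDist (outDist QX QYX) n ys = 0 → Ptyp QX QYX n M ε C ys = 0 := by
    intro ys h0
    obtain ⟨i, -, hi⟩ := Finset.prod_eq_zero_iff.mp h0
    have hchan0 : ∀ m, chanProd QYX n (C m) ys = 0 := by
      intro m
      have h1 : QX (C m i) * QYX (C m i) (ys i) = 0 := by
        have h2 : ∀ x ∈ (Finset.univ : Finset 𝒳), 0 ≤ QX x * QYX x (ys i) :=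
          fun x _ => mul_nonneg (hQX.1 x) ((hQYX x).1 _)
        exact (Finset.sum_eq_zero_iff_of_nonneg h2).mp hi _ (Finset.mem_univ _)
      have h3 : QYX (C m i) (ys i) = 0 := by
        rcases mul_eq_zero.mp h1 with h | h
        · exact absurd h (hQpos m i).ne'
        · exact h
      exact Finset.prod_eq_zero (Finset.mem_univ i) h3
    unfold Ptyp
    have : ∀ m : Fin M, (if JTypical QX QYX n ε (C m) ys then chanProd QYX n (C m) ys else 0)
        = 0 := by
      intro m; rw [hchan0 m]; split <;> rfl
    simp [this]
  have hP1le : ∀ ys, Ptyp QX QYX n M ε C ys - prodDist (outDist QX QYX) n ys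
      ≤ δ * prodDist (outDist QX QYX) n ys := by
    intro ys
    by_cases hQy : 0 < prodDist (outDist QX QYX) n ys
    · have hD : Dtyp QX QYX n M ε C ys * prodDist (outDist QX QYX) n ys
          = Ptyp QX QYX n M ε C ys := by
        unfold Dtyp Ptyp
        rw [mul_assoc, Finset.sum_mul]
        congr 1
        apply Finset.sum_congr rfl
        intro m _
        rw [ite_mul, zero_mul, div_mul_cancel₀ _ hQy.ne']
      have h1 := htyp ys hQy
      have h2 := mul_le_mul_of_nonneg_right h1 hQy.le
      rw [hD] at h2
      nlinarith
    · have hQ0 : prodDist (outDist QX QYX) n ys = 0 :=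
        le_antisymm (not_lt.mp hQy) (hQn.1 ys)
      rw [hQ0, hP1zero ys hQ0]
      simp
  have hsum1 : ∑ ys, inducedDist QYX n M C ys = 1 := by
    unfold inducedDist
    rw [← Finset.mul_sum, Finset.sum_comm]
    have h1 : ∀ m : Fin M, ∑ ys : Fin n → 𝒴, chanProd QYX n (C m) ys = 1 :=
      fun m => sum_chanProd hQYX n (C m)
    simp only [h1]
    rw [Finset.sum_const, Finset.card_univ, Fintype.card_fin, nsmul_eq_mul, mul_one]
    exact inv_mul_cancel₀ (by exact_mod_cast hM.ne')
  have hsplitsum : (∑ ys, Ptyp QX QYX n M ε C ys) + ∑ ys, Patyp QX QYX n M ε C ys = 1 := by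
    rw [← Finset.sum_add_distrib]
    rw [← hsum1]
    exact Finset.sum_congr rfl fun ys _ => (hsplitP ys).symm
  have habs : ∀ ys, |inducedDist QYX n M C ys - prodDist (outDist QX QYX) n ys|
      ≤ 2 * (δ * prodDist (outDist QX QYX) n ys)
        - (Ptyp QX QYX n M ε C ys - prodDist (outDist QX QYX) n ys)
        + Patyp QX QYX n M ε C ys := by
    intro ys
    have h1 : |inducedDist QYX n M C ys - prodDist (outDist QX QYX) n ys|
        ≤ |Ptyp QX QYX n M ε C ys - prodDist (outDist QX QYX) n ys|
          + Patyp QX QYX n M ε C ys := by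
      rw [hsplitP ys]
      calc |Ptyp QX QYX n M ε C ys + Patyp QX QYX n M ε C ys
            - prodDist (outDist QX QYX) n ys|
          = |(Ptyp QX QYX n M ε C ys - prodDist (outDist QX QYX) n ys)
            + Patyp QX QYX n M ε C ys| := by ring_nf
        _ ≤ |Ptyp QX QYX n M ε C ys - prodDist (outDist QX QYX) n ys|
            + |Patyp QX QYX n M ε C ys| := abs_add_le _ _
        _ = _ := by rw [abs_of_nonneg (hP2nn ys)]
    have h2 : |Ptyp QX QYX n M ε C ys - prodDist (outDist QX QYX) n ys|
        ≤ 2 * (δ * prodDist (outDist QX QYX) n ys)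
          - (Ptyp QX QYX n M ε C ys - prodDist (outDist QX QYX) n ys) := by
      have h3 := hP1le ys
      have h4 : 0 ≤ δ * prodDist (outDist QX QYX) n ys := mul_nonneg hδ (hQn.1 ys)
      rcases abs_cases (Ptyp QX QYX n M ε C ys - prodDist (outDist QX QYX) n ys) with
        ⟨he, _⟩ | ⟨he, _⟩ <;> rw [he] <;> linarith
    linarith
  have hsumabs : ∑ ys, |inducedDist QYX n M C ys - prodDist (outDist QX QYX) n ys|
      ≤ 2 * δ + 2 * ∑ ys, Patyp QX QYX n M ε C ys := by
    calc ∑ ys, |inducedDist QYX n M C ys - prodDist (outDist QX QYX) n ys|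
        ≤ ∑ ys, (2 * (δ * prodDist (outDist QX QYX) n ys)
            - (Ptyp QX QYX n M ε C ys - prodDist (outDist QX QYX) n ys)
            + Patyp QX QYX n M ε C ys) := Finset.sum_le_sum fun ys _ => habs ys
      _ = 2 * δ * (∑ ys, prodDist (outDist QX QYX) n ys)
            - ((∑ ys, Ptyp QX QYX n M ε C ys) - ∑ ys, prodDist (outDist QX QYX) n ys)
            + ∑ ys, Patyp QX QYX n M ε C ys := by
          simp only [← mul_assoc]
          rw [Finset.sum_add_distrib, Finset.sum_sub_distrib, Finset.sum_sub_distrib,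
            ← Finset.mul_sum]
      _ ≤ 2 * δ + 2 * ∑ ys, Patyp QX QYX n M ε C ys := by
          rw [hQn.2]
          linarith [hsplitsum]
  unfold tvDist
  have h2P2 : ∑ ys, Patyp QX QYX n M ε C ys ≤ δ := hatyp
  linarith [hsumabs]

private lemma atypProb_exp {𝒳 𝒴 : Type*} [Fintype 𝒳] [Fintype 𝒴]
    {QX : 𝒳 → ℝ} {QYX : 𝒳 → 𝒴 → ℝ} (hQX : IsPMF QX) (hQYX : ∀ x, IsPMF (QYX x))
    (hI : 0 ≤ mutualInfo QX QYX) {ε : ℝ} (hε0 : 0 < ε) (hε2 : ε ≤ 2) :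
    ∃ c > 0, ∀ n : ℕ, atypProb QX QYX n ε ≤ Real.exp (-(c * n)) := by
  classical
  haveI h𝒳 : Nonempty 𝒳 := by
    by_contra h
    rw [not_nonempty_iff] at h
    have h2 := hQX.2
    rw [Finset.univ_eq_empty, Finset.sum_empty] at h2
    norm_num at h2
  haveI h𝒴 : Nonempty 𝒴 := by
    by_contra h
    rw [not_nonempty_iff] at h
    have h2 := (isPMF_outDist hQX hQYX).2
    rw [Finset.univ_eq_empty, Finset.sum_empty] at h2
    norm_num at h2
  set u : 𝒳 × 𝒴 → ℝ := fun p => infoDensity QX QYX p.1 p.2 with hudef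
  set w : 𝒳 × 𝒴 → ℝ := fun p => QX p.1 * QYX p.1 p.2 with hwdef
  have hw0 : ∀ p, 0 ≤ w p := fun p => mul_nonneg (hQX.1 _) ((hQYX _).1 _)
  have hw1 : ∑ p, w p = 1 := by
    rw [Fintype.sum_prod_type]
    have h1 : ∀ x : 𝒳, ∑ y : 𝒴, w (x, y) = QX x := by
      intro x
      simp only [hwdef]
      rw [← Finset.mul_sum, (hQYX x).2, mul_one]
    simp only [h1]
    exact hQX.2
  have hIw : ∑ p, w p * u p = mutualInfo QX QYX := by
    rw [Fintype.sum_prod_type]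
    rfl
  set L := Finset.univ.inf' Finset.univ_nonempty u with hLdef
  set B := Finset.univ.sup' Finset.univ_nonempty u with hBdef
  have hLle : ∀ p, L ≤ u p := fun p => Finset.inf'_le u (Finset.mem_univ p)
  have hBge : ∀ p, u p ≤ B := fun p => Finset.le_sup' u (Finset.mem_univ p)
  set b' := max (B - L) 1 with hb'def
  have hb'1 : (1:ℝ) ≤ b' := le_max_right _ _
  have hb'0 : (0:ℝ) < b' := lt_of_lt_of_le one_pos hb'1
  set g : 𝒳 × 𝒴 → ℝ := fun p => (u p - L) / b' with hgdef
  have hg0 : ∀ p, 0 ≤ g p := fun p => div_nonneg (by linarith [hLle p]) hb'0.le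
  have hg1 : ∀ p, g p ≤ 1 := by
    intro p
    simp only [hgdef]
    rw [div_le_one hb'0]
    have h1 := hBge p
    have h2 := le_max_left (B - L) 1
    linarith
  have hμ : ∑ p, w p * g p = (mutualInfo QX QYX - L) / b' := by
    have h1 : ∀ p : 𝒳 × 𝒴, w p * g p = (w p * u p - L * w p) / b' := by
      intro p; simp only [hgdef]; ring
    simp only [h1]
    rw [← Finset.sum_div, Finset.sum_sub_distrib, hIw, ← Finset.mul_sum, hw1, mul_one]
  have hμ1 : ∑ p, w p * g p ≤ 1 := by
    rw [hμ, div_le_one hb'0]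
    have hIB : mutualInfo QX QYX ≤ B := by
      rw [← hIw]
      calc ∑ p, w p * u p ≤ ∑ p, w p * B :=
          Finset.sum_le_sum fun p _ => mul_le_mul_of_nonneg_left (hBge p) (hw0 p)
        _ = B := by rw [← Finset.sum_mul, hw1, one_mul]
    have h2 := le_max_left (B - L) 1
    linarith
  set δ' := ε / b' with hδ'def
  have hδ'0 : 0 < δ' := div_pos hε0 hb'0
  have hδ'2 : δ' ≤ 2 := le_trans (div_le_self hε0.le hb'1) hε2
  refine ⟨δ' ^ 2 / 4, by positivity, fun n => ?_⟩
  have hmain := chernoff w hw0 hw1 g 1 one_pos hg0 hg1 hμ1 hδ'0 hδ'2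
    (le_refl (∑ p, w p * g p + δ')) n
  have hexp : Real.exp (-((n:ℝ) * δ' ^ 2 / (4 * 1))) = Real.exp (-(δ' ^ 2 / 4 * (n:ℝ))) := by
    congr 1; ring
  rw [hexp] at hmain
  refine le_trans ?_ hmain
  -- re-index the sum over pairs of sequences as a sum over sequences of pairs
  have hre : atypProb QX QYX n ε = ∑ C : Fin n → 𝒳 × 𝒴,
      (if ¬ JTypical QX QYX n ε (fun i => (C i).1) (fun i => (C i).2)
        then prodDist QX n (fun i => (C i).1)
          * chanProd QYX n (fun i => (C i).1) (fun i => (C i).2) else 0) := by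
    unfold atypProb
    rw [← Fintype.sum_prod_type' (f := fun xs ys =>
      if ¬ JTypical QX QYX n ε xs ys then prodDist QX n xs * chanProd QYX n xs ys else 0)]
    exact (Equiv.sum_comp (Equiv.arrowProdEquivProdArrow (Fin n) (fun _ => 𝒳) (fun _ => 𝒴))
      (fun q => if ¬ JTypical QX QYX n ε q.1 q.2
        then prodDist QX n q.1 * chanProd QYX n q.1 q.2 else 0)).symm
  rw [hre]
  apply Finset.sum_le_sum
  intro C _
  set xs : Fin n → 𝒳 := fun i => (C i).1 with hxs
  set ysC : Fin n → 𝒴 := fun i => (C i).2 with hys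
  have hweq : prodDist QX n xs * chanProd QYX n xs ysC = ∏ i, w (C i) := by
    unfold prodDist chanProd
    rw [← Finset.prod_mul_distrib]
  have hwCnn : (0:ℝ) ≤ ∏ i, w (C i) := Finset.prod_nonneg fun i _ => hw0 _
  have hRnn : (0:ℝ) ≤ (if (n:ℝ) * (∑ p, w p * g p + δ') < ∑ i, g (C i)
      then ∏ i, w (C i) else 0) := by
    split
    · exact hwCnn
    · exact le_rfl
  rcases eq_or_lt_of_le hwCnn with hz | hz
  · have hW0 : prodDist QX n xs * chanProd QYX n xs ysC = 0 := hweq.trans hz.symm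
    rw [hW0, ite_self]
    exact hRnn
  · by_cases hJ : JTypical QX QYX n ε xs ysC
    · rw [if_neg (not_not_intro hJ)]
      exact hRnn
    · -- the atypical, positive-weight case
      rcases Nat.eq_zero_or_pos n with hn0 | hn
      · exfalso
        apply hJ
        unfold JTypical
        subst hn0
        simp only [Nat.cast_zero, inv_zero, zero_mul]
        linarith
      have hfac : ∀ i, 0 < w (C i) := by
        intro i
        rcases eq_or_lt_of_le (hw0 (C i)) with h0 | h0
        · exfalso
          have h1 : (∏ i, w (C i)) = 0 := Finset.prod_eq_zero (Finset.mem_univ i) h0.symm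
          rw [h1] at hz; exact lt_irrefl 0 hz
        · exact h0
      have hQXY : ∀ i, 0 < QX (C i).1 ∧ 0 < QYX (C i).1 (C i).2 := by
        intro i
        rcases mul_pos_iff.mp (hfac i) with h1 | h1
        · exact h1
        · exact absurd h1.1 (not_lt.mpr (hQX.1 _))
      have hQY : ∀ i, 0 < outDist QX QYX (C i).2 := by
        intro i
        have h2 : QX (C i).1 * QYX (C i).1 (C i).2 ≤ outDist QX QYX (C i).2 :=
          Finset.single_le_sum (f := fun x => QX x * QYX x (C i).2)
            (fun x _ => mul_nonneg (hQX.1 x) ((hQYX x).1 _)) (Finset.mem_univ _)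
        exact lt_of_lt_of_le (hfac i) h2
      have hri : ∀ i, (0:ℝ) < QYX (C i).1 (C i).2 / outDist QX QYX (C i).2 :=
        fun i => div_pos (hQXY i).2 (hQY i)
      have hlogsum : Real.logb 2
          (chanProd QYX n xs ysC / prodDist (outDist QX QYX) n ysC) = ∑ i, u (C i) := by
        unfold chanProd prodDist
        rw [← Finset.prod_div_distrib, Real.logb_prod _ _ (fun i _ => (hri i).ne')]
        rfl
      have hnpos : (0:ℝ) < (n:ℝ) := by exact_mod_cast hn
      have hJ' : mutualInfo QX QYX + ε
          < (n:ℝ)⁻¹ * Real.logb 2 (chanProd QYX n xs ysC / prodDist (outDist QX QYX) n ysC) :=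
        not_le.mp hJ
      rw [hlogsum] at hJ'
      have h5 : (n:ℝ) * (mutualInfo QX QYX + ε) < ∑ i, u (C i) := by
        have h6 := mul_lt_mul_of_pos_left hJ' hnpos
        rwa [← mul_assoc, mul_inv_cancel₀ hnpos.ne', one_mul] at h6
      have hgsum : ∑ i, g (C i) = ((∑ i, u (C i)) - (n:ℝ) * L) / b' := by
        simp only [hgdef]
        rw [← Finset.sum_div, Finset.sum_sub_distrib, Finset.sum_const, Finset.card_univ,
          Fintype.card_fin, nsmul_eq_mul]
      have hcond : (n:ℝ) * (∑ p, w p * g p + δ') < ∑ i, g (C i) := by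
        rw [hμ, hδ'def, hgsum]
        have hteq : (n:ℝ) * ((mutualInfo QX QYX - L) / b' + ε / b')
            = ((n:ℝ) * (mutualInfo QX QYX + ε) - (n:ℝ) * L) / b' := by
          field_simp
          ring
        rw [hteq]
        rw [div_lt_div_iff_of_pos_right hb'0]
        linarith
      rw [if_pos hcond, if_pos hJ]
      exact le_of_eq hweq

end SCAux

set_option maxHeartbeats 2000000 in
/-- **Soft covering with exponential convergence (Theorem 1, first part).**
For any `Q_X`, `Q_{Y|X}` and rate `R > I(X;Y)` (finite alphabets), there exist
`γ₁ > 0` and `γ₂ > 0` such that for `n` large enough, the probability over the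
random i.i.d. codebook `𝒞` of size `2^{nR}` that
`‖P_{Y^n|𝒞} − Q_{Y^n}‖_TV > e^{−γ₁ n}` is at most `e^{−e^{γ₂ n}}`. -/
theorem soft_covering_high_probability_exponential
    {𝒳 𝒴 : Type*} [Fintype 𝒳] [Fintype 𝒴]
    (QX : 𝒳 → ℝ) (QYX : 𝒳 → 𝒴 → ℝ) (hQX : IsPMF QX) (hQYX : ∀ x, IsPMF (QYX x))
    (R : ℝ) (hR : mutualInfo QX QYX < R) :
    ∃ γ₁ > (0 : ℝ), ∃ γ₂ > (0 : ℝ), ∃ N : ℕ, ∀ n ≥ N,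
      cbProb QX n ⌈(2 : ℝ) ^ ((n : ℝ) * R)⌉₊ (fun C =>
          Real.exp (-(γ₁ * n)) <
            tvDist (inducedDist QYX n ⌈(2 : ℝ) ^ ((n : ℝ) * R)⌉₊ C)
              (prodDist (outDist QX QYX) n))
        ≤ Real.exp (-Real.exp (γ₂ * n)) := by
  classical
  have hI0 : 0 ≤ mutualInfo QX QYX := SCAux.mutualInfo_nonneg hQX hQYX
  haveI h𝒴 : Nonempty 𝒴 := by
    by_contra h
    rw [not_nonempty_iff] at h
    have h2 := (SCAux.isPMF_outDist hQX hQYX).2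
    rw [Finset.univ_eq_empty, Finset.sum_empty] at h2
    norm_num at h2
  have hRI : 0 < (R - mutualInfo QX QYX) / 2 := by linarith only [hR]
  set η := (R - mutualInfo QX QYX) / 2 with hηdef
  set ε := min 1 η with hεdef
  have hε0 : 0 < ε := lt_min one_pos hRI
  have hε2 : ε ≤ 2 := le_trans (min_le_left _ _) one_le_two
  have hεη : ε ≤ η := min_le_right _ _
  have hIεR : mutualInfo QX QYX + ε + η ≤ R := by
    have : mutualInfo QX QYX + 2 * η = R := by rw [hηdef]; ring
    linarith only [this, hεη]
  obtain ⟨c, hc0, hcatyp⟩ := SCAux.atypProb_exp hQX hQYX hI0 hε0 hε2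
  have hln2 : (0:ℝ) < Real.log 2 := Real.log_pos one_lt_two
  set γ₁ := min c (η * Real.log 2) / 4 with hγ₁def
  have hγ₁0 : 0 < γ₁ := div_pos (lt_min hc0 (mul_pos hRI hln2)) (by norm_num)
  have hγ₁c : γ₁ ≤ c / 4 := by
    have := min_le_left c (η * Real.log 2); rw [hγ₁def]; linarith only [this]
  have hγ₁η : 4 * γ₁ ≤ η * Real.log 2 := by
    have := min_le_right c (η * Real.log 2); rw [hγ₁def]; linarith only [this]
  set α := η * Real.log 2 / 2 with hαdef
  have hα0 : 0 < α := by rw [hαdef]; positivity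
  set γ₂ := α / 2 with hγ₂def
  have hγ₂0 : 0 < γ₂ := by rw [hγ₂def]; positivity
  set Ycard := ((Fintype.card 𝒴 : ℕ) : ℝ) with hYdef
  have hY1 : (1:ℝ) ≤ Ycard := by
    rw [hYdef]
    exact_mod_cast Fintype.card_pos
  obtain ⟨N₁, hN₁⟩ := SCAux.linear_le_exp (a := 4) (b := 0) (show (0:ℝ) < c - γ₁ by linarith)
  obtain ⟨N₂, hN₂⟩ := SCAux.linear_le_exp (a := 128) (b := 0) hγ₂0
  obtain ⟨N₃, hN₃⟩ := SCAux.linear_le_exp (a := 128 * Real.log 2)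
    (b := 128 * Real.log Ycard) hα0
  refine ⟨γ₁, hγ₁0, γ₂, hγ₂0, max 1 (max N₁ (max N₂ N₃)), fun n hn => ?_⟩
  have hn1 : 1 ≤ n := le_trans (le_max_left _ _) hn
  have hn0 : 0 < n := hn1
  have hnN₁ : N₁ ≤ n := le_trans (le_trans (le_max_left _ _) (le_max_right _ _)) hn
  have hnN₂ : N₂ ≤ n :=
    le_trans (le_trans (le_trans (le_max_left _ _) (le_max_right _ _)) (le_max_right _ _)) hn
  have hnN₃ : N₃ ≤ n :=
    le_trans (le_trans (le_trans (le_max_right _ _) (le_max_right _ _)) (le_max_right _ _)) hn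
  have hnR0 : (0:ℝ) ≤ (n:ℝ) := Nat.cast_nonneg n
  set M := ⌈(2 : ℝ) ^ ((n : ℝ) * R)⌉₊ with hMdef
  have hM0 : 0 < M := Nat.ceil_pos.mpr (Real.rpow_pos_of_pos two_pos _)
  have hMge : (2:ℝ) ^ ((n:ℝ) * R) ≤ (M:ℝ) := Nat.le_ceil _
  set δn := Real.exp (-(γ₁ * n)) / 2 with hδndef
  have hE1pos : 0 < Real.exp (-(γ₁ * n)) := Real.exp_pos _
  have hδn0 : 0 < δn := by rw [hδndef]; positivity
  have hexple1 : Real.exp (-(γ₁ * n)) ≤ 1 := by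
    rw [← Real.exp_zero]
    apply Real.exp_le_exp.mpr
    have : (0:ℝ) ≤ γ₁ * n := by positivity
    linarith only [this]
  have hδn2 : δn ≤ 2 := by rw [hδndef]; linarith only [hexple1]
  have hδn22 : δn / 2 ≤ 2 := by linarith only [hδn2]
  have hδn20 : 0 < δn / 2 := by linarith only [hδn0]
  -- the atypical mass is at most δn/2 with margin
  have hatyp_small : atypProb QX QYX n ε + δn / 2 ≤ δn := by
    have h1 := hcatyp n
    have h2 := hN₁ n hnN₁
    rw [zero_mul, add_zero] at h2
    have h3 : Real.exp (-(c * n)) * 4 ≤ Real.exp (-(γ₁ * n)) := by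
      have h4 : Real.exp ((c - γ₁) * n) * Real.exp (-(c * n)) = Real.exp (-(γ₁ * n)) := by
        rw [← Real.exp_add]; congr 1; ring
      nlinarith only [h2, h4, Real.exp_pos (-(c * n))]
    rw [hδndef]
    linarith only [h1, h3]
  -- union bound over failure events
  set Qn := prodDist (outDist QX QYX) n with hQndef
  have hunion : cbProb QX n M (fun C =>
        Real.exp (-(γ₁ * n)) < tvDist (inducedDist QYX n M C) Qn)
      ≤ cbProb QX n M (fun C => δn < ∑ ys, Patyp QX QYX n M ε C ys)
        + ∑ ys : Fin n → 𝒴, cbProb QX n M (fun C =>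
            0 < Qn ys ∧ 1 + δn < Dtyp QX QYX n M ε C ys) := by
    have h := SCAux.cbProb_le_sum QX hQX.1 n M
      (fun C => Real.exp (-(γ₁ * n)) < tvDist (inducedDist QYX n M C) Qn)
      (F := fun (o : Option (Fin n → 𝒴)) C => o.elim
        (δn < ∑ ys, Patyp QX QYX n M ε C ys)
        (fun ys => 0 < Qn ys ∧ 1 + δn < Dtyp QX QYX n M ε C ys))
      (by
        intro C hw hEv
        by_contra hno
        push_neg at hno
        have hA : ¬ (δn < ∑ ys, Patyp QX QYX n M ε C ys) := hno none
        have htyp : ∀ ys, 0 < Qn ys → Dtyp QX QYX n M ε C ys ≤ 1 + δn := by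
          intro ys hy
          by_contra hlt
          exact hno (some ys) ⟨hy, not_le.mp hlt⟩
        have htv := SCAux.tv_bound hQX hQYX hM0 hδn0.le C hw htyp (not_lt.mp hA)
        have h2δ : 2 * δn = Real.exp (-(γ₁ * n)) := by rw [hδndef]; ring
        rw [h2δ] at htv
        exact absurd hEv (not_lt.mpr htv))
    refine le_trans h (le_of_eq ?_)
    rw [Fintype.sum_option]
    rfl
  -- bound the atypical-mass event
  have hbound1 : cbProb QX n M (fun C => δn < ∑ ys, Patyp QX QYX n M ε C ys)
      ≤ Real.exp (-((M:ℝ) * (δn / 2) ^ 2 / (4 * 1))) :=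
    SCAux.atyp_bound hQX hQYX hM0 hδn20 hδn22 hatyp_small
  -- bound each typical-deviation event
  set bn := (2:ℝ) ^ ((n:ℝ) * (mutualInfo QX QYX + ε)) with hbndef
  have hbn1 : (1:ℝ) ≤ bn := Real.one_le_rpow one_le_two (by positivity)
  have hbn0 : (0:ℝ) < bn := lt_of_lt_of_le one_pos hbn1
  have hbound2 : ∀ ys : Fin n → 𝒴, cbProb QX n M (fun C =>
        0 < Qn ys ∧ 1 + δn < Dtyp QX QYX n M ε C ys)
      ≤ Real.exp (-((M:ℝ) * δn ^ 2 / (4 * bn))) := by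
    intro ys
    by_cases hy : 0 < Qn ys
    · have heq : (fun C : Fin M → Fin n → 𝒳 =>
          0 < Qn ys ∧ 1 + δn < Dtyp QX QYX n M ε C ys)
          = fun C => 1 + δn < Dtyp QX QYX n M ε C ys := by
        funext C
        exact propext (and_iff_right hy)
      rw [heq, hbndef]
      exact SCAux.typ_bound hQX hQYX hn0 hM0 hδn0 hδn2 ys hy
    · have heq0 : cbProb QX n M (fun C =>
          0 < Qn ys ∧ 1 + δn < Dtyp QX QYX n M ε C ys) = 0 := by
        unfold cbProb
        apply Finset.sum_eq_zero
        intro C _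
        rw [if_neg (fun hcon => hy hcon.1)]
      rw [heq0]
      positivity
  -- key exponent comparison
  have hMEeq : (2:ℝ) ^ ((n:ℝ) * R) = Real.exp (Real.log 2 * ((n:ℝ) * R)) :=
    Real.rpow_def_of_pos two_pos _
  have hME : Real.exp ((Real.log 2 * R - 2 * γ₁) * n)
      ≤ (M:ℝ) * Real.exp (-(γ₁ * n)) ^ 2 := by
    have hsplit : Real.exp ((Real.log 2 * R - 2 * γ₁) * n)
        = Real.exp (Real.log 2 * ((n:ℝ) * R)) * Real.exp (-(γ₁ * n)) ^ 2 := by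
      rw [sq, ← Real.exp_add, ← Real.exp_add]; congr 1; ring
    rw [hsplit, ← hMEeq]
    exact mul_le_mul_of_nonneg_right hMge (by positivity)
  have hEb : Real.exp (α * n) * bn
      = Real.exp ((α + Real.log 2 * (mutualInfo QX QYX + ε)) * n) := by
    rw [hbndef, Real.rpow_def_of_pos two_pos, ← Real.exp_add]
    congr 1
    ring
  have h5 : α + Real.log 2 * (mutualInfo QX QYX + ε) ≤ Real.log 2 * R - 2 * γ₁ := by
    have h6 : mutualInfo QX QYX + ε ≤ R - η := by linarith
    have h7 := mul_le_mul_of_nonneg_left h6 hln2.le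
    have h8 : Real.log 2 * (R - η) = Real.log 2 * R - η * Real.log 2 := by ring
    have h9 : α = η * Real.log 2 / 2 := hαdef
    linarith only [h7, h8, h9, hγ₁η]
  have hKexp : Real.exp (α * n) * bn ≤ (M:ℝ) * Real.exp (-(γ₁ * n)) ^ 2 := by
    rw [hEb]
    refine le_trans (Real.exp_le_exp.mpr (mul_le_mul_of_nonneg_right h5 hnR0)) hME
  have hEle : Real.exp (α * n) ≤ (M:ℝ) * Real.exp (-(γ₁ * n)) ^ 2 :=
    le_trans (le_mul_of_one_le_right (Real.exp_pos _).le hbn1) hKexp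
  have hK1 : Real.exp (α * n) / 64 ≤ (M:ℝ) * (δn / 2) ^ 2 / (4 * 1) := by
    have heq : (M:ℝ) * (δn / 2) ^ 2 / (4 * 1)
        = (M:ℝ) * Real.exp (-(γ₁ * n)) ^ 2 / 64 := by
      rw [hδndef]; ring
    rw [heq]
    linarith only [hEle]
  have hK2 : Real.exp (α * n) / 64 ≤ (M:ℝ) * δn ^ 2 / (4 * bn) := by
    have h6 : Real.exp (α * n) ≤ (M:ℝ) * Real.exp (-(γ₁ * n)) ^ 2 / bn := by
      rw [le_div_iff₀ hbn0]; exact hKexp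
    have h7 : (M:ℝ) * δn ^ 2 / (4 * bn)
        = ((M:ℝ) * Real.exp (-(γ₁ * n)) ^ 2 / bn) / 16 := by
      rw [hδndef]; ring
    rw [h7]
    linarith only [h6, Real.exp_pos (α * n)]
  -- convert per-event bounds to a common bound
  have hT1 : Real.exp (-((M:ℝ) * (δn / 2) ^ 2 / (4 * 1)))
      ≤ Real.exp (-(Real.exp (α * n) / 64)) :=
    Real.exp_le_exp.mpr (by linarith only [hK1])
  have hT2 : Real.exp (-((M:ℝ) * δn ^ 2 / (4 * bn)))
      ≤ Real.exp (-(Real.exp (α * n) / 64)) :=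
    Real.exp_le_exp.mpr (by linarith only [hK2])
  -- sum the per-y bounds
  have hcard : ((Finset.univ : Finset (Fin n → 𝒴)).card : ℝ) = Ycard ^ n := by
    rw [Finset.card_univ, Fintype.card_fun, Fintype.card_fin, hYdef]
    push_cast
    rfl
  have hsumT : ∑ _ys : Fin n → 𝒴, Real.exp (-(Real.exp (α * n) / 64))
      = Ycard ^ n * Real.exp (-(Real.exp (α * n) / 64)) := by
    rw [Finset.sum_const, nsmul_eq_mul, hcard]
  -- final numeric estimate
  have hlog1 : Real.log 2 + (n:ℝ) * Real.log Ycard ≤ Real.exp (α * n) / 128 := by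
    have h2 := hN₃ n hnN₃
    linarith only [h2]
  have hlog2 : Real.exp (γ₂ * n) ≤ Real.exp (α * n) / 128 := by
    have h2 := hN₂ n hnN₂
    rw [zero_mul, add_zero] at h2
    have h3 : Real.exp (α * n) = Real.exp (γ₂ * n) * Real.exp (γ₂ * n) := by
      rw [← Real.exp_add]; congr 1; rw [hγ₂def]; ring
    nlinarith only [h2, h3, Real.exp_pos (γ₂ * n)]
  have hYexp : 1 + Ycard ^ n ≤ Real.exp (Real.log 2 + (n:ℝ) * Real.log Ycard) := by
    have hYpow1 : (1:ℝ) ≤ Ycard ^ n := one_le_pow₀ hY1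
    have heq : Real.exp (Real.log 2 + (n:ℝ) * Real.log Ycard) = 2 * Ycard ^ n := by
      rw [Real.exp_add, Real.exp_log two_pos, Real.exp_nat_mul,
        Real.exp_log (by linarith : (0:ℝ) < Ycard)]
    rw [heq]
    linarith only [hYpow1]
  have hfinal : (1 + Ycard ^ n) * Real.exp (-(Real.exp (α * n) / 64))
      ≤ Real.exp (-Real.exp (γ₂ * n)) := by
    calc (1 + Ycard ^ n) * Real.exp (-(Real.exp (α * n) / 64))
        ≤ Real.exp (Real.log 2 + (n:ℝ) * Real.log Ycard)
            * Real.exp (-(Real.exp (α * n) / 64)) :=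
          mul_le_mul_of_nonneg_right hYexp (Real.exp_pos _).le
      _ = Real.exp (Real.log 2 + (n:ℝ) * Real.log Ycard - Real.exp (α * n) / 64) := by
          rw [← Real.exp_add]
          all_goals congr 1
          all_goals ring
      _ ≤ Real.exp (-Real.exp (γ₂ * n)) := Real.exp_le_exp.mpr (by linarith only [hlog1, hlog2])
  -- put everything together
  calc cbProb QX n M (fun C =>
        Real.exp (-(γ₁ * n)) < tvDist (inducedDist QYX n M C) Qn)
      ≤ cbProb QX n M (fun C => δn < ∑ ys, Patyp QX QYX n M ε C ys)
        + ∑ ys : Fin n → 𝒴, cbProb QX n M (fun C =>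
            0 < Qn ys ∧ 1 + δn < Dtyp QX QYX n M ε C ys) := hunion
    _ ≤ Real.exp (-(Real.exp (α * n) / 64))
        + ∑ _ys : Fin n → 𝒴, Real.exp (-(Real.exp (α * n) / 64)) := by
        refine add_le_add (le_trans hbound1 hT1) (Finset.sum_le_sum fun ys _ => ?_)
        exact le_trans (hbound2 ys) hT2
    _ = (1 + Ycard ^ n) * Real.exp (-(Real.exp (α * n) / 64)) := by
        rw [hsumT]; ring
    _ ≤ Real.exp (-Real.exp (γ₂ * n)) := hfinal
end SoftCovering
end

section
/- For any input distribution Q_X, channel Q_{Y|X}, rate R, any n ∈ ℕ, and any δ ∈ (0, R − I(X;Y)), the probability (over the random i.i.d. codebook 𝒞 of size 2^{nR}) that ‖P_{Y^n|𝒞} − Q_{Y^n}‖_TV exceeds 3·2^{−n γ_δ} is at most (1 + |𝒴|^n) e^{−(1/3) 2^{nδ}}, where γ_δ = sup_{α > 1} ((α − 1)/(2α − 1)) (R − δ − d_α(Q_{X,Y}, Q_X Q_Y)). -/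
open Finset Real
open scoped BigOperators Classical

noncomputable section SoftCovering

variable {𝒳 𝒴 : Type*} [Fintype 𝒳] [Fintype 𝒴]

set_option linter.unusedSectionVars false
set_option maxHeartbeats 1000000

-- helpers
lemma sum_fn_prod {α : Type*} [Fintype α] (n : ℕ) (f : Fin n → α → ℝ) :
    ∑ xs : Fin n → α, ∏ i, f i (xs i) = ∏ i, ∑ a, f i a := by
  rw [Finset.prod_univ_sum, Fintype.piFinset_univ]

lemma sum_fn_prod_const {α : Type*} [Fintype α] (M : ℕ) (g : α → ℝ) :
    ∑ C : Fin M → α, ∏ m, g (C m) = (∑ a, g a) ^ M := by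
  rw [sum_fn_prod M (fun _ => g), Finset.prod_const, Finset.card_univ, Fintype.card_fin]

lemma prodDist_nonneg {α : Type*} [Fintype α] {p : α → ℝ} (hp : ∀ a, 0 ≤ p a) (n : ℕ)
    (xs : Fin n → α) : 0 ≤ prodDist p n xs :=
  Finset.prod_nonneg fun _ _ => hp _

lemma chanProd_nonneg {QYX : 𝒳 → 𝒴 → ℝ} (h : ∀ x, IsPMF (QYX x)) (n : ℕ)
    (xs : Fin n → 𝒳) (ys : Fin n → 𝒴) : 0 ≤ chanProd QYX n xs ys :=
  Finset.prod_nonneg fun _ _ => (h _).1 _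

lemma isPMF_prodDist {α : Type*} [Fintype α] {p : α → ℝ} (hp : IsPMF p) (n : ℕ) :
    IsPMF (prodDist p n) := by
  refine ⟨prodDist_nonneg hp.1 n, ?_⟩
  unfold prodDist
  rw [sum_fn_prod n (fun _ => p)]
  simp [hp.2]

lemma isPMF_outDist {QX : 𝒳 → ℝ} {QYX : 𝒳 → 𝒴 → ℝ} (hQX : IsPMF QX)
    (hQYX : ∀ x, IsPMF (QYX x)) : IsPMF (outDist QX QYX) := by
  constructor
  · intro y; exact Finset.sum_nonneg fun x _ => mul_nonneg (hQX.1 x) ((hQYX x).1 y)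
  · unfold outDist
    rw [Finset.sum_comm]
    have : ∀ x, ∑ y, QX x * QYX x y = QX x := by
      intro x; rw [← Finset.mul_sum, (hQYX x).2, mul_one]
    simp only [this, hQX.2]

lemma sum_chanProd {QYX : 𝒳 → 𝒴 → ℝ} (hQYX : ∀ x, IsPMF (QYX x)) (n : ℕ)
    (xs : Fin n → 𝒳) : ∑ ys : Fin n → 𝒴, chanProd QYX n xs ys = 1 := by
  unfold chanProd
  rw [sum_fn_prod n (fun i y => QYX (xs i) y)]
  simp [(hQYX _).2]

lemma marginal_eq {QX : 𝒳 → ℝ} {QYX : 𝒳 → 𝒴 → ℝ} (n : ℕ) (ys : Fin n → 𝒴) :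
    ∑ xs : Fin n → 𝒳, prodDist QX n xs * chanProd QYX n xs ys
      = prodDist (outDist QX QYX) n ys := by
  unfold prodDist chanProd
  have : ∀ xs : Fin n → 𝒳, (∏ i, QX (xs i)) * ∏ i, QYX (xs i) (ys i)
      = ∏ i, QX (xs i) * QYX (xs i) (ys i) := fun xs => (Finset.prod_mul_distrib).symm
  simp only [this]
  rw [sum_fn_prod n (fun i x => QX x * QYX x (ys i))]
  rfl



set_option linter.unusedSectionVars false


lemma exp_interp {θ c : ℝ} (h0 : 0 ≤ θ) (h1 : θ ≤ 1) :
    Real.exp (θ * c) ≤ 1 + θ * (Real.exp c - 1) := by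
  have h := convexOn_exp.2 (Set.mem_univ (0:ℝ)) (Set.mem_univ c)
    (by linarith : (0:ℝ) ≤ 1 - θ) h0 (by ring)
  simp only [smul_eq_mul, mul_zero, zero_add, Real.exp_zero, mul_one] at h
  linarith

lemma exp_le_quad {x : ℝ} (h0 : 0 ≤ x) (h1 : x ≤ 1) :
    Real.exp x ≤ 1 + x + (3/4) * x ^ 2 := by
  have h := Real.exp_bound (x := x) (by rwa [abs_of_nonneg h0]) (n := 2) (by norm_num)
  rw [abs_of_nonneg h0] at h
  have h2 : |Real.exp x - (1 + x)| ≤ x ^ 2 * (3 / 4) := by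
    convert h using 2
    · simp [Finset.sum_range_succ]
    · norm_num [Nat.factorial]
  have := (abs_le.mp h2).2
  linarith

lemma chernoff_core {β : Type*} [Fintype β] (p : β → ℝ) (hp : ∀ b, 0 ≤ p b)
    (f : β → ℝ) (s a : ℝ) (hs : 0 ≤ s) (M : ℕ) :
    (∑ C : Fin M → β, if a < ∑ m, f (C m) then ∏ m, p (C m) else 0)
      ≤ Real.exp (-(s * a)) * (∑ b, p b * Real.exp (s * f b)) ^ M := by
  have h1 : ∀ C : Fin M → β, (if a < ∑ m, f (C m) then ∏ m, p (C m) else 0)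
      ≤ Real.exp (-(s * a)) * ∏ m, (p (C m) * Real.exp (s * f (C m))) := by
    intro C
    have hprod : (0:ℝ) ≤ ∏ m, p (C m) := Finset.prod_nonneg fun _ _ => hp _
    have hrhs : ∏ m, (p (C m) * Real.exp (s * f (C m)))
        = (∏ m, p (C m)) * Real.exp (s * ∑ m, f (C m)) := by
      rw [Finset.prod_mul_distrib, Finset.mul_sum, Real.exp_sum]
    by_cases h : a < ∑ m, f (C m)
    · rw [if_pos h, hrhs]
      have h2 : (1:ℝ) ≤ Real.exp (-(s * a)) * Real.exp (s * ∑ m, f (C m)) := by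
        rw [← Real.exp_add]
        apply Real.one_le_exp
        nlinarith [mul_le_mul_of_nonneg_left h.le hs]
      nlinarith [mul_le_mul_of_nonneg_left h2 hprod]
    · rw [if_neg h]
      have : (0:ℝ) ≤ ∏ m, (p (C m) * Real.exp (s * f (C m))) :=
        Finset.prod_nonneg fun _ _ => mul_nonneg (hp _) (Real.exp_nonneg _)
      positivity
  calc (∑ C : Fin M → β, if a < ∑ m, f (C m) then ∏ m, p (C m) else 0)
      ≤ ∑ C : Fin M → β, Real.exp (-(s * a)) * ∏ m, (p (C m) * Real.exp (s * f (C m))) :=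
        Finset.sum_le_sum fun C _ => h1 C
    _ = Real.exp (-(s * a)) * ∑ C : Fin M → β, ∏ m, (p (C m) * Real.exp (s * f (C m))) := by
        rw [Finset.mul_sum]
    _ = Real.exp (-(s * a)) * (∑ b, p b * Real.exp (s * f b)) ^ M := by
        rw [sum_fn_prod_const M (fun b => p b * Real.exp (s * f b))]

lemma mgf_le {β : Type*} [Fintype β] (p : β → ℝ) (hp : (∀ b, 0 ≤ p b) ∧ ∑ b, p b = 1)
    (f : β → ℝ) (b s μ : ℝ) (hb : 0 < b) (hs : 0 ≤ s)
    (hf0 : ∀ x, 0 ≤ f x) (hfb : ∀ x, f x ≤ b)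
    (hmean : ∑ x, p x * f x ≤ μ) :
    ∑ x, p x * Real.exp (s * f x) ≤ Real.exp (μ * (Real.exp (s * b) - 1) / b) := by
  have hE : 0 ≤ Real.exp (s * b) - 1 := by
    have : (1:ℝ) ≤ Real.exp (s * b) := Real.one_le_exp (by positivity)
    linarith
  have step1 : ∑ x, p x * Real.exp (s * f x)
      ≤ ∑ x, p x * (1 + (f x / b) * (Real.exp (s * b) - 1)) := by
    apply Finset.sum_le_sum
    intro x _
    apply mul_le_mul_of_nonneg_left _ (hp.1 x)
    have hθ0 : 0 ≤ f x / b := div_nonneg (hf0 x) hb.le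
    have hθ1 : f x / b ≤ 1 := (div_le_one hb).mpr (hfb x)
    have := exp_interp (c := s * b) hθ0 hθ1
    have harg : f x / b * (s * b) = s * f x := by field_simp
    rwa [harg] at this
  have step2 : ∑ x, p x * (1 + (f x / b) * (Real.exp (s * b) - 1))
      = 1 + (∑ x, p x * f x) * ((Real.exp (s * b) - 1) / b) := by
    have : ∀ x, p x * (1 + (f x / b) * (Real.exp (s * b) - 1))
        = p x + (p x * f x) * ((Real.exp (s * b) - 1) / b) := by
      intro x; field_simp
    simp only [this]
    rw [Finset.sum_add_distrib, hp.2, ← Finset.sum_mul]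
  have step3 : 1 + (∑ x, p x * f x) * ((Real.exp (s * b) - 1) / b)
      ≤ 1 + μ * ((Real.exp (s * b) - 1) / b) := by
    have : (0:ℝ) ≤ (Real.exp (s * b) - 1) / b := div_nonneg hE hb.le
    nlinarith
  have step4 : 1 + μ * ((Real.exp (s * b) - 1) / b)
      ≤ Real.exp (μ * (Real.exp (s * b) - 1) / b) := by
    have := Real.add_one_le_exp (μ * (Real.exp (s * b) - 1) / b)
    have heq : μ * (Real.exp (s * b) - 1) / b = μ * ((Real.exp (s * b) - 1) / b) := by ring
    linarith [heq ▸ this]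
  linarith

lemma chernoff_tail {β : Type*} [Fintype β] (p : β → ℝ)
    (hp : (∀ b, 0 ≤ p b) ∧ ∑ b, p b = 1)
    (f : β → ℝ) (b s μ a : ℝ) (hb : 0 < b) (hs : 0 ≤ s)
    (hf0 : ∀ x, 0 ≤ f x) (hfb : ∀ x, f x ≤ b)
    (hmean : ∑ x, p x * f x ≤ μ) (M : ℕ) :
    (∑ C : Fin M → β, if a < ∑ m, f (C m) then ∏ m, p (C m) else 0)
      ≤ Real.exp (-(s * a) + M * (μ * (Real.exp (s * b) - 1) / b)) := by
  calc (∑ C : Fin M → β, if a < ∑ m, f (C m) then ∏ m, p (C m) else 0)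
      ≤ Real.exp (-(s * a)) * (∑ x, p x * Real.exp (s * f x)) ^ M :=
        chernoff_core p hp.1 f s a hs M
    _ ≤ Real.exp (-(s * a)) * Real.exp (μ * (Real.exp (s * b) - 1) / b) ^ M := by
        apply mul_le_mul_of_nonneg_left _ (Real.exp_nonneg _)
        apply pow_le_pow_left₀ (Finset.sum_nonneg fun x _ =>
          mul_nonneg (hp.1 x) (Real.exp_nonneg _))
        exact mgf_le p hp f b s μ hb hs hf0 hfb hmean
    _ = Real.exp (-(s * a) + M * (μ * (Real.exp (s * b) - 1) / b)) := by
        rw [← Real.exp_nat_mul, ← Real.exp_add]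


-- Rényi divergence nonnegativity for a > 1
lemma renyi_nonneg {QX : 𝒳 → ℝ} {QYX : 𝒳 → 𝒴 → ℝ} (hQX : IsPMF QX)
    (hQYX : ∀ x, IsPMF (QYX x)) {a : ℝ} (ha : 1 < a) :
    0 ≤ renyiDiv QX QYX a := by
  set QY := outDist QX QYX with hQY
  have hQYpmf : IsPMF QY := isPMF_outDist hQX hQYX
  set w : 𝒳 × 𝒴 → ℝ := fun q => QX q.1 * QY q.2 with hw
  set pj : 𝒳 × 𝒴 → ℝ := fun q => QX q.1 * QYX q.1 q.2 with hpj
  set z : 𝒳 × 𝒴 → ℝ := fun q => if w q = 0 then 0 else pj q / w q with hz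
  have hw0 : ∀ q, 0 ≤ w q := fun q => mul_nonneg (hQX.1 _) (hQYpmf.1 _)
  have hpj0 : ∀ q, 0 ≤ pj q := fun q => mul_nonneg (hQX.1 _) ((hQYX _).1 _)
  have hz0 : ∀ q, 0 ≤ z q := by
    intro q; rw [hz]; dsimp only
    split
    · exact le_rfl
    · exact div_nonneg (hpj0 q) (hw0 q)
  have hwz : ∀ q, w q = 0 → pj q = 0 := by
    rintro ⟨x, y⟩ hq
    rcases mul_eq_zero.mp hq with h | h
    · simp [hpj, h]
    · have : ∀ x' ∈ Finset.univ, QX x' * QYX x' y = 0 := by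
        rw [hQY] at h
        exact (Finset.sum_eq_zero_iff_of_nonneg
          (fun x' _ => mul_nonneg (hQX.1 _) ((hQYX _).1 _))).mp h
      exact this x (Finset.mem_univ x)
  have hsumw : ∑ q : 𝒳 × 𝒴, w q = 1 := by
    rw [Fintype.sum_prod_type]
    simp only [hw]
    have h1 : ∀ x, ∑ y, QX x * QY y = QX x := by
      intro x; rw [← Finset.mul_sum, hQYpmf.2, mul_one]
    simp only [h1, hQX.2]
  have hsumwz : ∑ q : 𝒳 × 𝒴, w q * z q = 1 := by
    have h0 : ∀ q : 𝒳 × 𝒴, w q * z q = pj q := by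
      intro q
      rw [hz]; dsimp only
      by_cases h : w q = 0
      · rw [if_pos h, h, zero_mul, (hwz q h)]
      · rw [if_neg h]; field_simp
    simp only [h0]
    rw [Fintype.sum_prod_type]
    simp only [hpj]
    have h1 : ∀ x, ∑ y, QX x * QYX x y = QX x := by
      intro x; rw [← Finset.mul_sum, (hQYX x).2, mul_one]
    simp only [h1, hQX.2]
  have key := Real.arith_mean_le_rpow_mean Finset.univ w z
    (fun q _ => hw0 q) hsumw (fun q _ => hz0 q) ha.le
  rw [hsumwz] at key
  have hS0 : 0 ≤ ∑ q : 𝒳 × 𝒴, w q * z q ^ a :=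
    Finset.sum_nonneg fun q _ => mul_nonneg (hw0 q) (Real.rpow_nonneg (hz0 q) a)
  have hS1 : 1 ≤ ∑ q : 𝒳 × 𝒴, w q * z q ^ a := by
    by_contra hlt
    push_neg at hlt
    have := Real.rpow_lt_one hS0 hlt (by positivity : (0:ℝ) < 1/a)
    linarith
  have hiden : ∀ q : 𝒳 × 𝒴, w q * z q ^ a = pj q ^ a * w q ^ (1 - a) := by
    intro q
    rw [hz]; dsimp only
    by_cases h : w q = 0
    · rw [if_pos h, h,
        Real.zero_rpow (by positivity : a ≠ 0),
        Real.zero_rpow (by linarith : (1:ℝ) - a ≠ 0), mul_zero, mul_zero]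
    · have hwpos : 0 < w q := lt_of_le_of_ne (hw0 q) (Ne.symm h)
      rw [if_neg h, Real.div_rpow (hpj0 q) (hw0 q), Real.rpow_sub hwpos, Real.rpow_one]
      ring
  rw [show (∑ q : 𝒳 × 𝒴, w q * z q ^ a)
      = ∑ x, ∑ y, (QX x * QYX x y) ^ a * (QX x * QY y) ^ (1 - a) by
    simp only [hiden]; rw [Fintype.sum_prod_type]] at hS1
  unfold renyiDiv
  exact mul_nonneg (inv_nonneg.mpr (by linarith)) (Real.logb_nonneg one_lt_two hS1)
-- Chernoff bound on the atypical probability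
lemma atyp_bound {QX : 𝒳 → ℝ} {QYX : 𝒳 → 𝒴 → ℝ} (hQX : IsPMF QX)
    (hQYX : ∀ x, IsPMF (QYX x)) {a : ℝ} (ha : 1 < a) {n : ℕ} (hn : 0 < n) (ε : ℝ) :
    atypProb QX QYX n ε
      ≤ 2 ^ ((n : ℝ) * (a - 1) * (renyiDiv QX QYX a - (mutualInfo QX QYX + ε))) := by
  set QY := outDist QX QYX with hQYdef
  have hQYpmf : IsPMF QY := isPMF_outDist hQX hQYX
  set τ : ℝ := mutualInfo QX QYX + ε with hτdef
  set c : ℝ := (n : ℝ) * τ * (a - 1) with hcdef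
  have hn' : (0 : ℝ) < n := by exact_mod_cast hn
  -- Step 1: termwise bound
  have step1 : ∀ (xs : Fin n → 𝒳) (ys : Fin n → 𝒴),
      (if ¬ JTypical QX QYX n ε xs ys then prodDist QX n xs * chanProd QYX n xs ys else 0)
        ≤ 2 ^ (-c) * (prodDist QX n xs *
            (chanProd QYX n xs ys ^ a * prodDist QY n ys ^ (1 - a))) := by
    intro xs ys
    have hPn0 : 0 ≤ prodDist QX n xs := prodDist_nonneg hQX.1 n xs
    have hch0 : 0 ≤ chanProd QYX n xs ys := chanProd_nonneg hQYX n xs ys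
    have hQn0 : 0 ≤ prodDist QY n ys := prodDist_nonneg hQYpmf.1 n ys
    have hRHS : 0 ≤ 2 ^ (-c) * (prodDist QX n xs *
        (chanProd QYX n xs ys ^ a * prodDist QY n ys ^ (1 - a))) := by
      apply mul_nonneg (Real.rpow_nonneg (by norm_num) _)
      exact mul_nonneg hPn0 (mul_nonneg (Real.rpow_nonneg hch0 _) (Real.rpow_nonneg hQn0 _))
    by_cases htyp : JTypical QX QYX n ε xs ys
    · rw [if_neg (not_not_intro htyp)]; exact hRHS
    · rw [if_pos htyp]
      by_cases hz : prodDist QX n xs * chanProd QYX n xs ys = 0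
      · rw [hz]; exact hRHS
      · have hPnpos : 0 < prodDist QX n xs :=
          lt_of_le_of_ne hPn0 (Ne.symm (left_ne_zero_of_mul hz))
        have hchpos : 0 < chanProd QYX n xs ys :=
          lt_of_le_of_ne hch0 (Ne.symm (right_ne_zero_of_mul hz))
        have hxpos : ∀ i, 0 < QX (xs i) := by
          intro i
          have := (Finset.prod_ne_zero_iff).mp (ne_of_gt hPnpos) i (Finset.mem_univ i)
          exact lt_of_le_of_ne (hQX.1 _) (Ne.symm this)
        have hypos : ∀ i, 0 < QYX (xs i) (ys i) := by
          intro i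
          have := (Finset.prod_ne_zero_iff).mp (ne_of_gt hchpos) i (Finset.mem_univ i)
          exact lt_of_le_of_ne ((hQYX _).1 _) (Ne.symm this)
        have hQnpos : 0 < prodDist QY n ys := by
          apply Finset.prod_pos
          intro i _
          calc (0:ℝ) < QX (xs i) * QYX (xs i) (ys i) :=
                mul_pos (hxpos i) (hypos i)
            _ ≤ QY (ys i) := Finset.single_le_sum
                (fun x _ => mul_nonneg (hQX.1 x) ((hQYX x).1 _)) (Finset.mem_univ (xs i))
        set r : ℝ := chanProd QYX n xs ys / prodDist QY n ys with hrdef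
        have hrpos : 0 < r := div_pos hchpos hQnpos
        have hlogb : (n : ℝ) * τ < Real.logb 2 r := by
          unfold JTypical at htyp
          push_neg at htyp
          rw [← hQYdef, ← hrdef, ← hτdef] at htyp
          calc (n : ℝ) * τ < (n : ℝ) * ((n : ℝ)⁻¹ * Real.logb 2 r) := by
                exact (mul_lt_mul_iff_right₀ hn').mpr htyp
            _ = Real.logb 2 r := by field_simp
        have hgt : (2 : ℝ) ^ ((n : ℝ) * τ) < r := by
          by_contra hle
          push_neg at hle
          have := (Real.logb_le_iff_le_rpow one_lt_two hrpos).mpr hle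
          linarith
        have hr : (2 : ℝ) ^ c ≤ r ^ (a - 1) := by
          have h1 := Real.rpow_le_rpow (Real.rpow_nonneg (by norm_num) _) hgt.le
            (by linarith : (0:ℝ) ≤ a - 1)
          rwa [← Real.rpow_mul (by norm_num : (0:ℝ) ≤ 2), ← hcdef] at h1
        have hone : (1 : ℝ) ≤ 2 ^ (-c) * r ^ (a - 1) := by
          have h2 : (2:ℝ) ^ (-c) * (2:ℝ) ^ c = 1 := by
            rw [← Real.rpow_add (by norm_num : (0:ℝ) < 2)]; simp
          calc (1:ℝ) = 2 ^ (-c) * 2 ^ c := h2.symm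
            _ ≤ 2 ^ (-c) * r ^ (a - 1) :=
              mul_le_mul_of_nonneg_left hr (Real.rpow_nonneg (by norm_num) _)
        have hkey : chanProd QYX n xs ys * r ^ (a - 1)
            = chanProd QYX n xs ys ^ a * prodDist QY n ys ^ (1 - a) := by
          have e1 : chanProd QYX n xs ys ^ a
              = chanProd QYX n xs ys * chanProd QYX n xs ys ^ (a - 1) := by
            nth_rewrite 2 [← Real.rpow_one (chanProd QYX n xs ys)]
            rw [← Real.rpow_add hchpos]; norm_num
          have e2 : prodDist QY n ys ^ (1 - a) = (prodDist QY n ys ^ (a - 1))⁻¹ := by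
            rw [show (1 - a) = -(a - 1) by ring, Real.rpow_neg hQn0]
          rw [hrdef, Real.div_rpow hch0 hQn0, e1, e2]
          field_simp
        calc prodDist QX n xs * chanProd QYX n xs ys
            ≤ prodDist QX n xs * chanProd QYX n xs ys * (2 ^ (-c) * r ^ (a - 1)) := by
              nth_rewrite 1 [← mul_one (prodDist QX n xs * chanProd QYX n xs ys)]
              exact mul_le_mul_of_nonneg_left hone (mul_nonneg hPn0 hch0)
          _ = 2 ^ (-c) * (prodDist QX n xs *
                (chanProd QYX n xs ys * r ^ (a - 1))) := by ring
          _ = 2 ^ (-c) * (prodDist QX n xs *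
                (chanProd QYX n xs ys ^ a * prodDist QY n ys ^ (1 - a))) := by rw [hkey]
  -- Step 2: sum the bound and factor into a product of single-letter sums
  set Z : ℝ := ∑ x, QX x * ∑ y, QYX x y ^ a * QY y ^ (1 - a) with hZdef
  have step2 : atypProb QX QYX n ε ≤ 2 ^ (-c) * Z ^ n := by
    unfold atypProb
    calc (∑ xs : Fin n → 𝒳, ∑ ys : Fin n → 𝒴,
          if ¬ JTypical QX QYX n ε xs ys then prodDist QX n xs * chanProd QYX n xs ys else 0)
        ≤ ∑ xs : Fin n → 𝒳, ∑ ys : Fin n → 𝒴, 2 ^ (-c) * (prodDist QX n xs *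
            (chanProd QYX n xs ys ^ a * prodDist QY n ys ^ (1 - a))) :=
          Finset.sum_le_sum fun xs _ => Finset.sum_le_sum fun ys _ => step1 xs ys
      _ = 2 ^ (-c) * ∑ xs : Fin n → 𝒳, prodDist QX n xs *
            ∑ ys : Fin n → 𝒴, chanProd QYX n xs ys ^ a * prodDist QY n ys ^ (1 - a) := by
          simp only [Finset.mul_sum]
      _ = 2 ^ (-c) * Z ^ n := by
          congr 1
          have hinner : ∀ xs : Fin n → 𝒳,
              (∑ ys : Fin n → 𝒴, chanProd QYX n xs ys ^ a * prodDist QY n ys ^ (1 - a))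
                = ∏ i, ∑ y, QYX (xs i) y ^ a * QY y ^ (1 - a) := by
            intro xs
            have hterm : ∀ ys : Fin n → 𝒴,
                chanProd QYX n xs ys ^ a * prodDist QY n ys ^ (1 - a)
                  = ∏ i, QYX (xs i) (ys i) ^ a * QY (ys i) ^ (1 - a) := by
              intro ys
              unfold chanProd prodDist
              rw [← Real.finset_prod_rpow _ _ (fun i _ => (hQYX _).1 _) a,
                ← Real.finset_prod_rpow _ _ (fun i _ => hQYpmf.1 _) (1 - a),
                ← Finset.prod_mul_distrib]
            simp only [hterm]
            exact sum_fn_prod n (fun i y => QYX (xs i) y ^ a * QY y ^ (1 - a))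
          simp only [hinner]
          have : ∀ xs : Fin n → 𝒳, prodDist QX n xs *
              ∏ i, (∑ y, QYX (xs i) y ^ a * QY y ^ (1 - a))
                = ∏ i, (QX (xs i) * ∑ y, QYX (xs i) y ^ a * QY y ^ (1 - a)) := by
            intro xs; unfold prodDist; rw [← Finset.prod_mul_distrib]
          simp only [this]
          rw [sum_fn_prod n (fun _ x => QX x * ∑ y, QYX x y ^ a * QY y ^ (1 - a))]
          rw [Finset.prod_const, Finset.card_univ, Fintype.card_fin, hZdef]
  -- Step 3: identify Z with the Rényi sum
  have step3 : Z = ∑ x, ∑ y, (QX x * QYX x y) ^ a * (QX x * QY y) ^ (1 - a) := by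
    rw [hZdef]
    apply Finset.sum_congr rfl
    intro x _
    rw [Finset.mul_sum]
    apply Finset.sum_congr rfl
    intro y _
    by_cases hx : QX x = 0
    · rw [hx, zero_mul, zero_mul, Real.zero_rpow (by positivity : a ≠ 0), zero_mul]
    · have hxpos : 0 < QX x := lt_of_le_of_ne (hQX.1 x) (Ne.symm hx)
      rw [Real.mul_rpow (hQX.1 x) ((hQYX x).1 y), Real.mul_rpow (hQX.1 x) (hQYpmf.1 y)]
      have : QX x ^ a * QX x ^ (1 - a) = QX x := by
        rw [← Real.rpow_add hxpos]; norm_num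
      calc QX x * (QYX x y ^ a * QY y ^ (1 - a))
          = (QX x ^ a * QX x ^ (1 - a)) * (QYX x y ^ a * QY y ^ (1 - a)) := by rw [this]
        _ = QX x ^ a * QYX x y ^ a * (QX x ^ (1 - a) * QY y ^ (1 - a)) := by ring
  -- Step 4: Z > 0 and Z = 2 ^ ((a-1) * renyiDiv)
  have hZpos : 0 < Z := by
    obtain ⟨x0, hx0⟩ : ∃ x, 0 < QX x := by
      by_contra hno
      push_neg at hno
      have : ∑ x, QX x = 0 := le_antisymm (Finset.sum_nonpos fun x _ => hno x)
        (Finset.sum_nonneg fun x _ => hQX.1 x)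
      rw [hQX.2] at this; norm_num at this
    obtain ⟨y0, hy0⟩ : ∃ y, 0 < QYX x0 y := by
      by_contra hno
      push_neg at hno
      have : ∑ y, QYX x0 y = 0 := le_antisymm (Finset.sum_nonpos fun y _ => hno y)
        (Finset.sum_nonneg fun y _ => (hQYX x0).1 y)
      rw [(hQYX x0).2] at this; norm_num at this
    have hQy0 : 0 < QY y0 :=
      lt_of_lt_of_le (mul_pos hx0 hy0) (Finset.single_le_sum
        (fun x _ => mul_nonneg (hQX.1 x) ((hQYX x).1 _)) (Finset.mem_univ x0))
    rw [hZdef]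
    apply Finset.sum_pos'
    · intro x _
      exact mul_nonneg (hQX.1 x) (Finset.sum_nonneg fun y _ =>
        mul_nonneg (Real.rpow_nonneg ((hQYX x).1 y) _) (Real.rpow_nonneg (hQYpmf.1 y) _))
    · refine ⟨x0, Finset.mem_univ x0, mul_pos hx0 ?_⟩
      apply Finset.sum_pos'
      · intro y _
        exact mul_nonneg (Real.rpow_nonneg ((hQYX x0).1 y) _)
          (Real.rpow_nonneg (hQYpmf.1 y) _)
      · exact ⟨y0, Finset.mem_univ y0, mul_pos (Real.rpow_pos_of_pos hy0 a)
          (Real.rpow_pos_of_pos hQy0 (1 - a))⟩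
  have hZeq : Z = 2 ^ ((a - 1) * renyiDiv QX QYX a) := by
    have : (a - 1) * renyiDiv QX QYX a = Real.logb 2 Z := by
      unfold renyiDiv
      rw [← hQYdef, ← step3, ← mul_assoc, mul_inv_cancel₀ (by linarith : a - 1 ≠ 0), one_mul]
    rw [this, Real.rpow_logb (by norm_num) (by norm_num) hZpos]
  -- Combine
  calc atypProb QX QYX n ε ≤ 2 ^ (-c) * Z ^ n := step2
    _ = 2 ^ (-c) * 2 ^ (((a - 1) * renyiDiv QX QYX a) * (n : ℝ)) := by
        rw [hZeq, ← Real.rpow_natCast ((2:ℝ) ^ ((a - 1) * renyiDiv QX QYX a)) n,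
          ← Real.rpow_mul (by norm_num : (0:ℝ) ≤ 2)]
    _ = 2 ^ (-c + ((a - 1) * renyiDiv QX QYX a) * (n : ℝ)) := by
        rw [← Real.rpow_add (by norm_num : (0:ℝ) < 2)]
    _ = 2 ^ ((n : ℝ) * (a - 1) * (renyiDiv QX QYX a - τ)) := by
        rw [hcdef]; ring_nf
-- cbProb utilities
lemma cbWeight_nonneg {QX : 𝒳 → ℝ} (hQX : ∀ x, 0 ≤ QX x) {n M : ℕ}
    (C : Fin M → Fin n → 𝒳) : 0 ≤ ∏ m, prodDist QX n (C m) :=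
  Finset.prod_nonneg fun m _ => prodDist_nonneg hQX n (C m)

lemma cbProb_nonneg {QX : 𝒳 → ℝ} (hQX : ∀ x, 0 ≤ QX x) (n M : ℕ)
    (E : (Fin M → Fin n → 𝒳) → Prop) : 0 ≤ cbProb QX n M E := by
  apply Finset.sum_nonneg
  intro C _
  split
  · exact cbWeight_nonneg hQX C
  · exact le_rfl

lemma cbProb_congr {QX : 𝒳 → ℝ} (n M : ℕ) {E F : (Fin M → Fin n → 𝒳) → Prop}
    (h : ∀ C, E C ↔ F C) : cbProb QX n M E = cbProb QX n M F :=
  Finset.sum_congr rfl fun C _ => if_congr (h C) rfl rfl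

lemma cbProb_mono {QX : 𝒳 → ℝ} (hQX : ∀ x, 0 ≤ QX x) (n M : ℕ)
    {E F : (Fin M → Fin n → 𝒳) → Prop} (h : ∀ C, E C → F C) :
    cbProb QX n M E ≤ cbProb QX n M F := by
  apply Finset.sum_le_sum
  intro C _
  by_cases hE : E C
  · rw [if_pos hE, if_pos (h C hE)]
  · rw [if_neg hE]
    split
    · exact cbWeight_nonneg hQX C
    · exact le_rfl

lemma cbProb_or_le {QX : 𝒳 → ℝ} (hQX : ∀ x, 0 ≤ QX x) (n M : ℕ)
    (E F : (Fin M → Fin n → 𝒳) → Prop) :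
    cbProb QX n M (fun C => E C ∨ F C) ≤ cbProb QX n M E + cbProb QX n M F := by
  unfold cbProb
  rw [← Finset.sum_add_distrib]
  apply Finset.sum_le_sum
  intro C _
  have hw := cbWeight_nonneg hQX C
  by_cases hE : E C
  · rw [if_pos (Or.inl hE), if_pos hE]
    split
    · linarith
    · linarith
  · by_cases hF : F C
    · rw [if_pos (Or.inr hF), if_neg hE, if_pos hF]; linarith
    · rw [if_neg (by tauto), if_neg hE, if_neg hF]; linarith

lemma cbProb_exists_le {QX : 𝒳 → ℝ} (hQX : ∀ x, 0 ≤ QX x) (n M : ℕ)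
    {ι : Type*} [Fintype ι] (E : ι → (Fin M → Fin n → 𝒳) → Prop) :
    cbProb QX n M (fun C => ∃ i, E i C) ≤ ∑ i, cbProb QX n M (fun C => E i C) := by
  unfold cbProb
  rw [Finset.sum_comm]
  apply Finset.sum_le_sum
  intro C _
  have hw := cbWeight_nonneg hQX C
  by_cases hE : ∃ i, E i C
  · obtain ⟨i0, hi0⟩ := hE
    rw [if_pos ⟨i0, hi0⟩]
    calc (∏ m, prodDist QX n (C m))
        = (if E i0 C then ∏ m, prodDist QX n (C m) else 0) := by rw [if_pos hi0]
      _ ≤ ∑ i, (if E i C then ∏ m, prodDist QX n (C m) else 0) :=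
          Finset.single_le_sum (f := fun i => if E i C then ∏ m, prodDist QX n (C m) else 0)
            (fun i _ => by split <;> [exact hw; exact le_rfl]) (Finset.mem_univ i0)
  · rw [if_neg hE]
    exact Finset.sum_nonneg fun i _ => by split <;> [exact hw; exact le_rfl]

-- induced distribution facts
lemma inducedDist_nonneg {QYX : 𝒳 → 𝒴 → ℝ} (hQYX : ∀ x, IsPMF (QYX x)) (n M : ℕ)
    (C : Fin M → Fin n → 𝒳) (ys : Fin n → 𝒴) : 0 ≤ inducedDist QYX n M C ys :=
  mul_nonneg (inv_nonneg.mpr (Nat.cast_nonneg M))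
    (Finset.sum_nonneg fun m _ => chanProd_nonneg hQYX n (C m) ys)

lemma sum_inducedDist {QYX : 𝒳 → 𝒴 → ℝ} (hQYX : ∀ x, IsPMF (QYX x)) (n : ℕ) {M : ℕ}
    (hM : M ≠ 0) (C : Fin M → Fin n → 𝒳) :
    ∑ ys : Fin n → 𝒴, inducedDist QYX n M C ys = 1 := by
  unfold inducedDist
  rw [← Finset.mul_sum, Finset.sum_comm]
  have : ∀ m, ∑ ys : Fin n → 𝒴, chanProd QYX n (C m) ys = 1 :=
    fun m => sum_chanProd hQYX n (C m)
  simp only [this, Finset.sum_const, Finset.card_univ, Fintype.card_fin, nsmul_eq_mul,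
    mul_one]
  rw [inv_mul_cancel₀ (by exact_mod_cast hM)]

lemma Ptyp_add_Patyp {QX : 𝒳 → ℝ} {QYX : 𝒳 → 𝒴 → ℝ} (n M : ℕ) (ε : ℝ)
    (C : Fin M → Fin n → 𝒳) (ys : Fin n → 𝒴) :
    Ptyp QX QYX n M ε C ys + Patyp QX QYX n M ε C ys = inducedDist QYX n M C ys := by
  unfold Ptyp Patyp inducedDist
  rw [← mul_add, ← Finset.sum_add_distrib]
  congr 1
  apply Finset.sum_congr rfl
  intro m _
  by_cases h : JTypical QX QYX n ε (C m) ys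
  · rw [if_pos h, if_neg (not_not_intro h), add_zero]
  · rw [if_neg h, if_pos h, zero_add]

lemma Patyp_nonneg {QX : 𝒳 → ℝ} {QYX : 𝒳 → 𝒴 → ℝ} (hQYX : ∀ x, IsPMF (QYX x))
    (n M : ℕ) (ε : ℝ) (C : Fin M → Fin n → 𝒳) (ys : Fin n → 𝒴) :
    0 ≤ Patyp QX QYX n M ε C ys := by
  apply mul_nonneg (inv_nonneg.mpr (Nat.cast_nonneg M))
  apply Finset.sum_nonneg
  intro m _
  split
  · exact chanProd_nonneg hQYX n (C m) ys
  · exact le_rfl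

lemma Ptyp_nonneg {QX : 𝒳 → ℝ} {QYX : 𝒳 → 𝒴 → ℝ} (hQYX : ∀ x, IsPMF (QYX x))
    (n M : ℕ) (ε : ℝ) (C : Fin M → Fin n → 𝒳) (ys : Fin n → 𝒴) :
    0 ≤ Ptyp QX QYX n M ε C ys := by
  apply mul_nonneg (inv_nonneg.mpr (Nat.cast_nonneg M))
  apply Finset.sum_nonneg
  intro m _
  split
  · exact chanProd_nonneg hQYX n (C m) ys
  · exact le_rfl

-- TV distance bound from the two events
lemma tv_le_of_events {QX : 𝒳 → ℝ} {QYX : 𝒳 → 𝒴 → ℝ} (hQX : IsPMF QX)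
    (hQYX : ∀ x, IsPMF (QYX x)) (n : ℕ) {M : ℕ} (hM : M ≠ 0) (ε t : ℝ) (ht : 0 ≤ t)
    (C : Fin M → Fin n → 𝒳)
    (h1 : ∀ ys, Ptyp QX QYX n M ε C ys ≤ (1 + t) * prodDist (outDist QX QYX) n ys)
    (h2 : ∑ ys : Fin n → 𝒴, Patyp QX QYX n M ε C ys ≤ 2 * t) :
    tvDist (inducedDist QYX n M C) (prodDist (outDist QX QYX) n) ≤ 3 * t := by
  set P := inducedDist QYX n M C with hP
  set Q := prodDist (outDist QX QYX) n with hQ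
  have hQpmf : IsPMF Q := isPMF_prodDist (isPMF_outDist hQX hQYX) n
  have hsum : ∑ ys : Fin n → 𝒴, (P ys - Q ys) = 0 := by
    rw [Finset.sum_sub_distrib, sum_inducedDist hQYX n hM C, hQpmf.2, sub_self]
  have habs : ∀ ys : Fin n → 𝒴, |P ys - Q ys| = 2 * max (P ys - Q ys) 0 - (P ys - Q ys) := by
    intro ys
    rcases le_or_gt (P ys - Q ys) 0 with h | h
    · rw [max_eq_right h, abs_of_nonpos h]; ring
    · rw [max_eq_left h.le, abs_of_pos h]; ring
  have hmax : ∀ ys : Fin n → 𝒴, max (P ys - Q ys) 0 ≤ t * Q ys + Patyp QX QYX n M ε C ys := by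
    intro ys
    apply max_le
    · have := Ptyp_add_Patyp (QX := QX) (QYX := QYX) n M ε C ys
      have h1' := h1 ys
      rw [hP, ← this]
      linarith
    · exact add_nonneg (mul_nonneg ht (hQpmf.1 ys)) (Patyp_nonneg hQYX n M ε C ys)
  have hsummax : ∑ ys : Fin n → 𝒴, max (P ys - Q ys) 0 ≤ 3 * t := by
    calc ∑ ys : Fin n → 𝒴, max (P ys - Q ys) 0
        ≤ ∑ ys : Fin n → 𝒴, (t * Q ys + Patyp QX QYX n M ε C ys) :=
          Finset.sum_le_sum fun ys _ => hmax ys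
      _ = t * ∑ ys : Fin n → 𝒴, Q ys + ∑ ys : Fin n → 𝒴, Patyp QX QYX n M ε C ys := by
          rw [Finset.sum_add_distrib, Finset.mul_sum]
      _ ≤ t * 1 + 2 * t := by rw [hQpmf.2]; linarith
      _ = 3 * t := by ring
  unfold tvDist
  simp only [habs]
  rw [Finset.sum_sub_distrib, hsum, sub_zero, ← Finset.mul_sum]
  linarith

-- TV distance is at most 1 for PMFs
lemma tv_le_one {β : Type*} [Fintype β] {P Q : β → ℝ}
    (hP : (∀ y, 0 ≤ P y) ∧ ∑ y, P y = 1) (hQ : IsPMF Q) : tvDist P Q ≤ 1 := by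
  unfold tvDist
  have : ∀ y, |P y - Q y| ≤ P y + Q y := by
    intro y
    rw [abs_sub_le_iff]
    constructor <;> nlinarith [hP.1 y, hQ.1 y]
  calc (1/2) * ∑ y, |P y - Q y| ≤ (1/2) * ∑ y, (P y + Q y) := by
        apply mul_le_mul_of_nonneg_left (Finset.sum_le_sum fun y _ => this y) (by norm_num)
    _ = 1 := by rw [Finset.sum_add_distrib, hP.2, hQ.2]; norm_num
-- Main soft-covering bound for a fixed exponent γ
lemma main_gamma {QX : 𝒳 → ℝ} {QYX : 𝒳 → 𝒴 → ℝ} (hQX : IsPMF QX)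
    (hQYX : ∀ x, IsPMF (QYX x)) (R : ℝ) {n M : ℕ} (hn : 0 < n)
    (hM : (M : ℝ) = 2 ^ ((n : ℝ) * R)) (δ : ℝ) (γ : ℝ) (hγ0 : 0 < γ) (hγR : γ ≤ R - δ) :
    atypProb QX QYX n (R - δ - 2 * γ - mutualInfo QX QYX) ≤ 2 ^ (-((n : ℝ) * γ)) →
    cbProb QX n M (fun C =>
        3 * 2 ^ (-((n : ℝ) * γ)) <
          tvDist (inducedDist QYX n M C) (prodDist (outDist QX QYX) n))
      ≤ (1 + (Fintype.card 𝒴 : ℝ) ^ n) * Real.exp (-(1 / 3) * 2 ^ ((n : ℝ) * δ)) := by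
  intro hatyp
  set ε : ℝ := R - δ - 2 * γ - mutualInfo QX QYX with hεdef
  have hτ : mutualInfo QX QYX + ε = R - δ - 2 * γ := by rw [hεdef]; ring
  set t : ℝ := (2 : ℝ) ^ (-((n : ℝ) * γ)) with htdef
  have ht0 : 0 < t := Real.rpow_pos_of_pos (by norm_num) _
  have ht1 : t ≤ 1 := Real.rpow_le_one_of_one_le_of_nonpos (by norm_num)
    (neg_nonpos.mpr (mul_nonneg (Nat.cast_nonneg n) hγ0.le))
  have hM0 : (0 : ℝ) < M := by rw [hM]; exact Real.rpow_pos_of_pos (by norm_num) _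
  have hMne : M ≠ 0 := by exact_mod_cast hM0.ne'
  set Qn := prodDist (outDist QX QYX) n with hQndef
  have hQnpmf : IsPMF Qn := isPMF_prodDist (isPMF_outDist hQX hQYX) n
  have hPnpmf : IsPMF (prodDist QX n) := isPMF_prodDist hQX n
  set Ebig : ℝ := Real.exp (-(1 / 3) * 2 ^ ((n : ℝ) * δ)) with hEbig
  -- event inclusion
  have hincl : ∀ C : Fin M → Fin n → 𝒳,
      3 * t < tvDist (inducedDist QYX n M C) Qn →
      ((∃ ys : Fin n → 𝒴, (1 + t) * Qn ys < Ptyp QX QYX n M ε C ys) ∨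
        2 * t < ∑ ys : Fin n → 𝒴, Patyp QX QYX n M ε C ys) := by
    intro C hC
    by_contra hno
    push_neg at hno
    exact absurd (tv_le_of_events hQX hQYX n hMne ε t ht0.le C hno.1 hno.2)
      (not_le.mpr hC)
  -- Bound on the atypical-mass event
  have hB : cbProb QX n M
      (fun C => 2 * t < ∑ ys : Fin n → 𝒴, Patyp QX QYX n M ε C ys) ≤ Ebig := by
    set S : (Fin n → 𝒳) → ℝ := fun xs =>
      ∑ ys : Fin n → 𝒴, if ¬ JTypical QX QYX n ε xs ys then chanProd QYX n xs ys else 0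
      with hSdef
    have hexch : ∀ C : Fin M → Fin n → 𝒳,
        ∑ ys : Fin n → 𝒴, Patyp QX QYX n M ε C ys = (M : ℝ)⁻¹ * ∑ m, S (C m) := by
      intro C
      unfold Patyp
      rw [← Finset.mul_sum, Finset.sum_comm]
    have hiff : ∀ C : Fin M → Fin n → 𝒳,
        (2 * t < ∑ ys : Fin n → 𝒴, Patyp QX QYX n M ε C ys) ↔
          (2 * t * M < ∑ m, S (C m)) := by
      intro C
      rw [hexch C, inv_mul_eq_div, lt_div_iff₀ hM0]
    rw [cbProb_congr n M hiff]
    have hS0 : ∀ xs, 0 ≤ S xs := by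
      intro xs
      apply Finset.sum_nonneg
      intro ys _
      split
      · exact chanProd_nonneg hQYX n xs ys
      · exact le_rfl
    have hS1 : ∀ xs, S xs ≤ 1 := by
      intro xs
      calc S xs ≤ ∑ ys : Fin n → 𝒴, chanProd QYX n xs ys := by
            apply Finset.sum_le_sum
            intro ys _
            split
            · exact le_rfl
            · exact chanProd_nonneg hQYX n xs ys
        _ = 1 := sum_chanProd hQYX n xs
    have hmean : ∑ xs : Fin n → 𝒳, prodDist QX n xs * S xs ≤ t := by
      have : ∑ xs : Fin n → 𝒳, prodDist QX n xs * S xs = atypProb QX QYX n ε := by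
        unfold atypProb
        rw [hSdef]
        simp only [Finset.mul_sum, mul_ite, mul_zero]
      rw [this]
      exact hatyp
    calc cbProb QX n M (fun C => 2 * t * M < ∑ m, S (C m))
        ≤ Real.exp (-(Real.log 2 * (2 * t * M)) +
            M * (t * (Real.exp (Real.log 2 * 1) - 1) / 1)) := by
          unfold cbProb
          exact chernoff_tail (prodDist QX n) ⟨hPnpmf.1, hPnpmf.2⟩ S 1 (Real.log 2) t
            (2 * t * M) one_pos (Real.log_nonneg one_le_two) hS0 hS1 hmean M
      _ ≤ Ebig := by
          rw [hEbig, Real.exp_le_exp, mul_one, Real.exp_log (by norm_num : (0:ℝ) < 2)]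
          have hMt : (M : ℝ) * t = 2 ^ ((n : ℝ) * R + -((n : ℝ) * γ)) := by
            rw [hM, htdef, Real.rpow_add (by norm_num : (0:ℝ) < 2)]
          have hMt2 : (2 : ℝ) ^ ((n : ℝ) * δ) ≤ (M : ℝ) * t := by
            rw [hMt]
            apply Real.rpow_le_rpow_left_iff (by norm_num : (1:ℝ) < 2) |>.mpr
            have : (0 : ℝ) ≤ (n : ℝ) := Nat.cast_nonneg n
            nlinarith
          have hlog2 : (0.6931471803 : ℝ) < Real.log 2 := Real.log_two_gt_d9
          have hMtpos : 0 < (M : ℝ) * t := mul_pos hM0 ht0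
          nlinarith [hMt2, mul_le_mul_of_nonneg_left hMt2 (by norm_num : (0:ℝ) ≤ 1/3)]
  -- Bound on each per-ys event
  have hA : ∀ ys : Fin n → 𝒴, cbProb QX n M
      (fun C => (1 + t) * Qn ys < Ptyp QX QYX n M ε C ys) ≤ Ebig := by
    intro ys
    by_cases hq : 0 < Qn ys
    · -- main Chernoff bound
      set b : ℝ := (2 : ℝ) ^ ((n : ℝ) * (R - δ - 2 * γ)) with hbdef
      have hb : 0 < b := Real.rpow_pos_of_pos (by norm_num) _
      set s : ℝ := 2 * t / (3 * b) with hsdef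
      have hs : 0 ≤ s := by positivity
      set W : (Fin n → 𝒳) → ℝ := fun xs =>
        if JTypical QX QYX n ε xs ys then chanProd QYX n xs ys / Qn ys else 0 with hWdef
      have hWchan : ∀ xs, W xs = (if JTypical QX QYX n ε xs ys
          then chanProd QYX n xs ys else 0) / Qn ys := by
        intro xs
        rw [hWdef]
        dsimp only
        split
        · rfl
        · rw [zero_div]
      have hPtypW : ∀ C : Fin M → Fin n → 𝒳,
          Ptyp QX QYX n M ε C ys = (M : ℝ)⁻¹ * (∑ m, W (C m)) * Qn ys := by
        intro C
        unfold Ptyp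
        simp only [hWchan]
        rw [← Finset.sum_div]
        field_simp
      have hiff : ∀ C : Fin M → Fin n → 𝒳,
          ((1 + t) * Qn ys < Ptyp QX QYX n M ε C ys) ↔
            ((1 + t) * M < ∑ m, W (C m)) := by
        intro C
        rw [hPtypW C, mul_lt_mul_iff_left₀ hq, inv_mul_eq_div, lt_div_iff₀ hM0]
      rw [cbProb_congr n M hiff]
      have hW0 : ∀ xs, 0 ≤ W xs := by
        intro xs
        rw [hWdef]
        dsimp only
        split
        · exact div_nonneg (chanProd_nonneg hQYX n xs ys) hq.le
        · exact le_rfl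
      have hWb : ∀ xs, W xs ≤ b := by
        intro xs
        rw [hWdef]
        dsimp only
        split
        · next htyp =>
            unfold JTypical at htyp
            rw [← hQndef] at htyp
            set r : ℝ := chanProd QYX n xs ys / Qn ys with hrdef
            have hr0 : 0 ≤ r := div_nonneg (chanProd_nonneg hQYX n xs ys) hq.le
            rcases eq_or_lt_of_le hr0 with h0 | hrpos
            · rw [← h0]; exact hb.le
            · have hn' : (0 : ℝ) < n := by exact_mod_cast hn
              have hlogb : Real.logb 2 r ≤ (n : ℝ) * (mutualInfo QX QYX + ε) := by
                calc Real.logb 2 r = (n : ℝ) * ((n : ℝ)⁻¹ * Real.logb 2 r) := by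
                      field_simp
                  _ ≤ (n : ℝ) * (mutualInfo QX QYX + ε) :=
                      mul_le_mul_of_nonneg_left htyp hn'.le
              have := (Real.logb_le_iff_le_rpow one_lt_two hrpos).mp hlogb
              rwa [hbdef, ← hτ]
        · exact hb.le
      have hmean : ∑ xs : Fin n → 𝒳, prodDist QX n xs * W xs ≤ 1 := by
        calc ∑ xs : Fin n → 𝒳, prodDist QX n xs * W xs
            ≤ ∑ xs : Fin n → 𝒳, prodDist QX n xs * (chanProd QYX n xs ys / Qn ys) := by
              apply Finset.sum_le_sum
              intro xs _
              apply mul_le_mul_of_nonneg_left _ (hPnpmf.1 xs)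
              rw [hWdef]
              dsimp only
              split
              · exact le_rfl
              · exact div_nonneg (chanProd_nonneg hQYX n xs ys) hq.le
          _ = (∑ xs : Fin n → 𝒳, prodDist QX n xs * chanProd QYX n xs ys) / Qn ys := by
              simp only [← mul_div_assoc]
              rw [← Finset.sum_div]
          _ = 1 := by rw [marginal_eq, ← hQndef, div_self hq.ne']
      calc cbProb QX n M (fun C => (1 + t) * M < ∑ m, W (C m))
          ≤ Real.exp (-(s * ((1 + t) * M)) +
              M * (1 * (Real.exp (s * b) - 1) / b)) := by
            unfold cbProb
            exact chernoff_tail (prodDist QX n) ⟨hPnpmf.1, hPnpmf.2⟩ W b s 1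
              ((1 + t) * M) hb hs hW0 hWb hmean M
        _ ≤ Ebig := by
            rw [hEbig, Real.exp_le_exp]
            have hsb : s * b = 2 * t / 3 := by
              rw [hsdef]; field_simp
            have hquad : Real.exp (2 * t / 3) ≤ 1 + 2 * t / 3 + (3/4) * (2 * t / 3) ^ 2 :=
              exp_le_quad (by positivity) (by linarith)
            have hMb : (M : ℝ) * t ^ 2 / b = 2 ^ ((n : ℝ) * δ) := by
              rw [hM, htdef, hbdef, sq, ← Real.rpow_add (by norm_num : (0:ℝ) < 2),
                ← Real.rpow_add (by norm_num : (0:ℝ) < 2),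
                ← Real.rpow_sub (by norm_num : (0:ℝ) < 2)]
              congr 1
              ring
            have heq : -(s * ((1 + t) * M)) + M * (1 * (Real.exp (s * b) - 1) / b)
                = ((M : ℝ) / b) * (Real.exp (2 * t / 3) - 1 - (2 * t / 3) * (1 + t)) := by
              rw [hsb, hsdef]
              field_simp
              ring
            have h2 : Real.exp (2 * t / 3) - 1 - (2 * t / 3) * (1 + t) ≤ -(t ^ 2 / 3) := by
              nlinarith
            have hKpos : (0 : ℝ) < (M : ℝ) / b := div_pos hM0 hb
            have h4 : ((M : ℝ) / b) * (-(t ^ 2 / 3)) = -(1/3) * 2 ^ ((n : ℝ) * δ) := by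
              rw [← hMb]; ring
            calc -(s * ((1 + t) * M)) + M * (1 * (Real.exp (s * b) - 1) / b)
                = ((M : ℝ) / b) * (Real.exp (2 * t / 3) - 1 - (2 * t / 3) * (1 + t)) := heq
              _ ≤ ((M : ℝ) / b) * (-(t ^ 2 / 3)) :=
                  mul_le_mul_of_nonneg_left h2 hKpos.le
              _ = -(1/3) * 2 ^ ((n : ℝ) * δ) := h4
    · -- Qn ys = 0 : the event has probability zero
      have hq0 : Qn ys = 0 := le_antisymm (not_lt.mp hq) (hQnpmf.1 ys)
      have hzero : ∀ C : Fin M → Fin n → 𝒳,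
          (if (1 + t) * Qn ys < Ptyp QX QYX n M ε C ys
            then ∏ m, prodDist QX n (C m) else 0) ≤ 0 := by
        intro C
        split
        · next hev =>
            rw [hq0, mul_zero] at hev
            -- some codeword has positive typical channel probability
            have hex : ∃ m, 0 < (if JTypical QX QYX n ε (C m) ys
                then chanProd QYX n (C m) ys else 0) := by
              by_contra hno
              push_neg at hno
              have : Ptyp QX QYX n M ε C ys ≤ 0 := by
                unfold Ptyp
                apply mul_nonpos_of_nonneg_of_nonpos (inv_nonneg.mpr (Nat.cast_nonneg M))
                exact Finset.sum_nonpos fun m _ => hno m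
              linarith
            obtain ⟨m0, hm0⟩ := hex
            have hchpos : 0 < chanProd QYX n (C m0) ys := by
              by_cases h : JTypical QX QYX n ε (C m0) ys
              · rwa [if_pos h] at hm0
              · rw [if_neg h] at hm0; linarith
            have hPn0 : prodDist QX n (C m0) = 0 := by
              by_contra hne
              have hPnpos : 0 < prodDist QX n (C m0) :=
                lt_of_le_of_ne (prodDist_nonneg hQX.1 n (C m0)) (Ne.symm hne)
              have hxpos : ∀ i, 0 < QX (C m0 i) := by
                intro i
                have := (Finset.prod_ne_zero_iff).mp (ne_of_gt hPnpos) i (Finset.mem_univ i)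
                exact lt_of_le_of_ne (hQX.1 _) (Ne.symm this)
              have hypos : ∀ i, 0 < QYX (C m0 i) (ys i) := by
                intro i
                have := (Finset.prod_ne_zero_iff).mp (ne_of_gt hchpos) i (Finset.mem_univ i)
                exact lt_of_le_of_ne ((hQYX _).1 _) (Ne.symm this)
              have : 0 < Qn ys := by
                apply Finset.prod_pos
                intro i _
                calc (0:ℝ) < QX (C m0 i) * QYX (C m0 i) (ys i) :=
                      mul_pos (hxpos i) (hypos i)
                  _ ≤ outDist QX QYX (ys i) := Finset.single_le_sum
                      (fun x _ => mul_nonneg (hQX.1 x) ((hQYX x).1 _))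
                      (Finset.mem_univ (C m0 i))
              rw [hq0] at this
              exact lt_irrefl 0 this
            calc ∏ m, prodDist QX n (C m) = 0 :=
                Finset.prod_eq_zero (Finset.mem_univ m0) hPn0
              _ ≤ 0 := le_rfl
        · exact le_rfl
      calc cbProb QX n M (fun C => (1 + t) * Qn ys < Ptyp QX QYX n M ε C ys)
          ≤ 0 := Finset.sum_nonpos fun C _ => hzero C
        _ ≤ Ebig := (Real.exp_pos _).le
  -- assemble
  calc cbProb QX n M (fun C =>
        3 * t < tvDist (inducedDist QYX n M C) Qn)
      ≤ cbProb QX n M (fun C =>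
          (∃ ys : Fin n → 𝒴, (1 + t) * Qn ys < Ptyp QX QYX n M ε C ys) ∨
            2 * t < ∑ ys : Fin n → 𝒴, Patyp QX QYX n M ε C ys) :=
        cbProb_mono hQX.1 n M hincl
    _ ≤ cbProb QX n M (fun C =>
          ∃ ys : Fin n → 𝒴, (1 + t) * Qn ys < Ptyp QX QYX n M ε C ys) +
        cbProb QX n M (fun C =>
          2 * t < ∑ ys : Fin n → 𝒴, Patyp QX QYX n M ε C ys) :=
        cbProb_or_le hQX.1 n M _ _
    _ ≤ (∑ ys : Fin n → 𝒴, cbProb QX n M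
          (fun C => (1 + t) * Qn ys < Ptyp QX QYX n M ε C ys)) +
        cbProb QX n M (fun C =>
          2 * t < ∑ ys : Fin n → 𝒴, Patyp QX QYX n M ε C ys) :=
        add_le_add_left (cbProb_exists_le hQX.1 n M _) _
    _ ≤ (∑ _ys : Fin n → 𝒴, Ebig) + Ebig :=
        add_le_add (Finset.sum_le_sum fun ys _ => hA ys) hB
    _ = (1 + (Fintype.card 𝒴 : ℝ) ^ n) * Ebig := by
        rw [Finset.sum_const, Finset.card_univ, Fintype.card_fun, Fintype.card_fin,
          nsmul_eq_mul]
        push_cast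
        ring
lemma cbProb_event_zero {QX : 𝒳 → ℝ} (n M : ℕ) {E : (Fin M → Fin n → 𝒳) → Prop}
    (h : ∀ C, ¬ E C) : cbProb QX n M E = 0 :=
  Finset.sum_eq_zero fun C _ => if_neg (h C)

/-- **Soft covering, precise one-shot form (Theorem 1, second part).**
For any `n` and any `δ ∈ (0, R − I(X;Y))`, the probability over the random codebook
of size `M = 2^{nR}` that `‖P_{Y^n|𝒞} − Q_{Y^n}‖_TV > 3·2^{−nγ_δ}` is at most
`(1 + |𝒴|^n) e^{−(1/3) 2^{nδ}}`, where
`γ_δ = sup_{α>1} ((α−1)/(2α−1)) (R − δ − d_α(Q_{X,Y}, Q_X Q_Y))`. -/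
theorem soft_covering_precise
    {𝒳 𝒴 : Type*} [Fintype 𝒳] [Fintype 𝒴]
    (QX : 𝒳 → ℝ) (QYX : 𝒳 → 𝒴 → ℝ) (hQX : IsPMF QX) (hQYX : ∀ x, IsPMF (QYX x))
    (R : ℝ) (n M : ℕ) (hM : (M : ℝ) = 2 ^ ((n : ℝ) * R))
    (δ : ℝ) (hδ : δ ∈ Set.Ioo 0 (R - mutualInfo QX QYX))
    (γδ : ℝ)
    (hγδ : γδ = ⨆ α : {a : ℝ // 1 < a},
      (((α : ℝ) - 1) / (2 * (α : ℝ) - 1)) * (R - δ - renyiDiv QX QYX (α : ℝ))) :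
    cbProb QX n M (fun C =>
        3 * 2 ^ (-((n : ℝ) * γδ)) <
          tvDist (inducedDist QYX n M C) (prodDist (outDist QX QYX) n))
      ≤ (1 + (Fintype.card 𝒴 : ℝ) ^ n) * Real.exp (-(1 / 3) * 2 ^ ((n : ℝ) * δ)) := by
  have hM0 : (0 : ℝ) < M := by rw [hM]; exact Real.rpow_pos_of_pos (by norm_num) _
  have hMne : M ≠ 0 := by exact_mod_cast hM0.ne'
  have hRHS0 : (0 : ℝ) ≤ (1 + (Fintype.card 𝒴 : ℝ) ^ n) *
      Real.exp (-(1 / 3) * 2 ^ ((n : ℝ) * δ)) := by positivity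
  have htvle : ∀ C : Fin M → Fin n → 𝒳,
      tvDist (inducedDist QYX n M C) (prodDist (outDist QX QYX) n) ≤ 1 := fun C =>
    tv_le_one ⟨inducedDist_nonneg hQYX n M C, sum_inducedDist hQYX n hMne C⟩
      (isPMF_prodDist (isPMF_outDist hQX hQYX) n)
  rcases le_or_gt γδ 0 with hpos | hpos
  · -- γδ ≤ 0 : the threshold exceeds 1, so the event is empty
    rw [cbProb_event_zero n M (fun C => ?_)]
    · exact hRHS0
    · intro hC
      have h1 : (1 : ℝ) ≤ 2 ^ (-((n : ℝ) * γδ)) := by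
        calc (1 : ℝ) = 2 ^ (0 : ℝ) := (Real.rpow_zero 2).symm
          _ ≤ 2 ^ (-((n : ℝ) * γδ)) := by
            apply Real.rpow_le_rpow_of_exponent_le (by norm_num)
            have : (n : ℝ) * γδ ≤ 0 := mul_nonpos_of_nonneg_of_nonpos (Nat.cast_nonneg n) hpos
            linarith
      have := htvle C
      nlinarith
  · rcases Nat.eq_zero_or_pos n with hn0 | hn
    · -- n = 0 : threshold is 3, event is empty
      subst hn0
      rw [cbProb_event_zero 0 M (fun C => ?_)]
      · exact hRHS0
      · intro hC
        have hz : -(((0:ℕ) : ℝ) * γδ) = 0 := by norm_num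
        rw [hz, Real.rpow_zero] at hC
        have := htvle C
        nlinarith
    · -- main case : n ≥ 1 and γδ > 0
      have hn' : (0 : ℝ) < n := by exact_mod_cast hn
      set Efin : Finset (Fin M → Fin n → 𝒳) := Finset.univ.filter (fun C =>
        3 * 2 ^ (-((n : ℝ) * γδ)) <
          tvDist (inducedDist QYX n M C) (prodDist (outDist QX QYX) n)) with hEfin
      rcases Finset.eq_empty_or_nonempty Efin with hE | hne
      · rw [cbProb_event_zero n M (fun C => ?_)]
        · exact hRHS0
        · intro hC
          have : C ∈ Efin := Finset.mem_filter.mpr ⟨Finset.mem_univ C, hC⟩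
          rw [hE] at this
          exact absurd this (Finset.notMem_empty C)
      · obtain ⟨C0, hC0mem, hC0min⟩ := Finset.exists_min_image Efin
          (fun C => tvDist (inducedDist QYX n M C) (prodDist (outDist QX QYX) n)) hne
        set T : ℝ := tvDist (inducedDist QYX n M C0) (prodDist (outDist QX QYX) n) with hT
        have hTgt : 3 * 2 ^ (-((n : ℝ) * γδ)) < T := (Finset.mem_filter.mp hC0mem).2
        have hrp : (0 : ℝ) < 2 ^ (-((n : ℝ) * γδ)) := Real.rpow_pos_of_pos (by norm_num) _
        have hT3 : 0 < T / 3 := by nlinarith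
        haveI : Nonempty {a : ℝ // 1 < a} := ⟨⟨2, one_lt_two⟩⟩
        have hmaxlt : max (-((n : ℝ)⁻¹) * Real.logb 2 (T / 3)) 0 < γδ := by
          apply max_lt _ hpos
          have h1 : (2 : ℝ) ^ (-((n : ℝ) * γδ)) < T / 3 := by linarith
          have h2 : -((n : ℝ) * γδ) < Real.logb 2 (T / 3) := by
            have h3 := Real.logb_lt_logb one_lt_two hrp h1
            rwa [Real.logb_rpow (by norm_num) (by norm_num)] at h3
          have heq : -((n : ℝ))⁻¹ * Real.logb 2 (T / 3)
              = (-Real.logb 2 (T / 3)) / (n : ℝ) := by ring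
          rw [heq, div_lt_iff₀ hn']
          nlinarith
        have hex : ∃ α : {a : ℝ // 1 < a}, max (-((n : ℝ)⁻¹) * Real.logb 2 (T / 3)) 0 <
            (((α : ℝ) - 1) / (2 * (α : ℝ) - 1)) * (R - δ - renyiDiv QX QYX (α : ℝ)) := by
          apply exists_lt_of_lt_ciSup
          rw [← hγδ]
          exact hmaxlt
        obtain ⟨α, hα⟩ := hex
        have hα1 : (1 : ℝ) < (α : ℝ) := α.2
        set γ : ℝ := (((α : ℝ) - 1) / (2 * (α : ℝ) - 1)) *
          (R - δ - renyiDiv QX QYX (α : ℝ)) with hγdef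
        have hγ0 : 0 < γ := lt_of_le_of_lt (le_max_right _ _) hα
        have hfac : 0 < ((α : ℝ) - 1) / (2 * (α : ℝ) - 1) :=
          div_pos (by linarith) (by linarith)
        have hd0 : 0 ≤ renyiDiv QX QYX (α : ℝ) := renyi_nonneg hQX hQYX hα1
        have hRd : 0 < R - δ - renyiDiv QX QYX (α : ℝ) := by
          by_contra hle
          push_neg at hle
          have : γ ≤ 0 := mul_nonpos_of_nonneg_of_nonpos hfac.le hle
          linarith
        have hγR : γ ≤ R - δ := by
          have hfac2 : ((α : ℝ) - 1) / (2 * (α : ℝ) - 1) ≤ 1 / 2 := by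
            rw [div_le_div_iff₀ (by linarith) (by norm_num)]
            linarith
          have h5 := mul_le_mul_of_nonneg_right hfac2 hRd.le
          rw [hγdef]
          nlinarith
        have hatyp : atypProb QX QYX n (R - δ - 2 * γ - mutualInfo QX QYX)
            ≤ 2 ^ (-((n : ℝ) * γ)) := by
          have hb := atyp_bound hQX hQYX hα1 hn (R - δ - 2 * γ - mutualInfo QX QYX)
          have hexp : (n : ℝ) * ((α : ℝ) - 1) * (renyiDiv QX QYX (α : ℝ) -
              (mutualInfo QX QYX + (R - δ - 2 * γ - mutualInfo QX QYX))) = -((n : ℝ) * γ) := by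
            have h2a : 2 * (α : ℝ) - 1 ≠ 0 := by linarith
            rw [hγdef]
            have hg : (((α : ℝ) - 1) / (2 * (α : ℝ) - 1) * (R - δ - renyiDiv QX QYX (α : ℝ)))
                * (2 * (α : ℝ) - 1) = ((α : ℝ) - 1) * (R - δ - renyiDiv QX QYX (α : ℝ)) := by
              rw [mul_right_comm, div_mul_cancel₀ _ h2a]
            linear_combination (n : ℝ) * hg
          rwa [hexp] at hb
        have hsub : ∀ C : Fin M → Fin n → 𝒳,
            (3 * 2 ^ (-((n : ℝ) * γδ)) <
              tvDist (inducedDist QYX n M C) (prodDist (outDist QX QYX) n)) →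
            (3 * 2 ^ (-((n : ℝ) * γ)) <
              tvDist (inducedDist QYX n M C) (prodDist (outDist QX QYX) n)) := by
          intro C hC
          have hCmem : C ∈ Efin := Finset.mem_filter.mpr ⟨Finset.mem_univ C, hC⟩
          have hge := hC0min C hCmem
          have h3 := lt_of_le_of_lt (le_max_left _ _) hα
          have heq : -((n : ℝ))⁻¹ * Real.logb 2 (T / 3)
              = (-Real.logb 2 (T / 3)) / (n : ℝ) := by ring
          rw [heq, div_lt_iff₀ hn'] at h3
          have h1 : -((n : ℝ) * γ) < Real.logb 2 (T / 3) := by nlinarith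
          have h4 : (2 : ℝ) ^ (-((n : ℝ) * γ)) < T / 3 := by
            calc (2 : ℝ) ^ (-((n : ℝ) * γ)) < 2 ^ (Real.logb 2 (T / 3)) :=
                Real.rpow_lt_rpow_of_exponent_lt one_lt_two h1
              _ = T / 3 := Real.rpow_logb (by norm_num) (by norm_num) hT3
          linarith
        calc cbProb QX n M (fun C =>
              3 * 2 ^ (-((n : ℝ) * γδ)) <
                tvDist (inducedDist QYX n M C) (prodDist (outDist QX QYX) n))
            ≤ cbProb QX n M (fun C =>
              3 * 2 ^ (-((n : ℝ) * γ)) <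
                tvDist (inducedDist QYX n M C) (prodDist (outDist QX QYX) n)) :=
              cbProb_mono hQX.1 n M hsub
          _ ≤ (1 + (Fintype.card 𝒴 : ℝ) ^ n) * Real.exp (-(1 / 3) * 2 ^ ((n : ℝ) * δ)) :=
              main_gamma hQX hQYX R hn hM δ γ hγ0 hγR hatyp
end SoftCovering
end

section
/- For every codebook C = {x^n(m)}_{m=1}^{M} with M = 2^{nR} and every ε > 0, the total variation distance between the induced distribution and the product output distribution satisfies ‖P_{Y^n|C} − Q_{Y^n}‖_TV ≤ Σ_{y^n} Q_{Y^n}(y^n) [D_{C,1}(y^n) − 1]_+ + Σ_{y^n} P_{C,2}(y^n), where [z]_+ = max{z,0}. -/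
open Finset Real
open scoped BigOperators Classical

noncomputable section SoftCovering

variable {𝒳 𝒴 : Type*} [Fintype 𝒳] [Fintype 𝒴]

lemma sum_pi_prod {n : ℕ} {α : Type*} [Fintype α] (f : Fin n → α → ℝ) :
    ∑ ys : Fin n → α, ∏ i, f i (ys i) = ∏ i : Fin n, ∑ a, f i a := by
  rw [Finset.prod_univ_sum, ← Fintype.piFinset_univ]

/-- **Splitting the total variation (Eq. (15) of the paper).**
For every codebook `C` of size `M = 2^{nR}` (with codewords in the support of `Q_X`)
and every `ε > 0`,
`‖P_{Y^n|C} − Q_{Y^n}‖_TV ≤ ∑_{y^n} Q_{Y^n}(y^n)[D_{C,1}(y^n) − 1]₊ + ∑_{y^n} P_{C,2}(y^n)`. -/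
theorem tv_le_typical_plus_atypical
    {𝒳 𝒴 : Type*} [Fintype 𝒳] [Fintype 𝒴]
    (QX : 𝒳 → ℝ) (QYX : 𝒳 → 𝒴 → ℝ) (hQX : IsPMF QX) (hQYX : ∀ x, IsPMF (QYX x))
    (n M : ℕ) (hM : 0 < M) (ε : ℝ) (hε : 0 < ε)
    (C : Fin M → Fin n → 𝒳) (hC : ∀ m i, 0 < QX (C m i)) :
    tvDist (inducedDist QYX n M C) (prodDist (outDist QX QYX) n)
      ≤ (∑ ys, prodDist (outDist QX QYX) n ys * max (Dtyp QX QYX n M ε C ys - 1) 0)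
        + ∑ ys, Patyp QX QYX n M ε C ys := by
  obtain ⟨hQX0, hQX1⟩ := hQX
  have hQYX0 : ∀ x y, 0 ≤ QYX x y := fun x y => (hQYX x).1 y
  set Q : (Fin n → 𝒴) → ℝ := prodDist (outDist QX QYX) n with hQdef
  set P : (Fin n → 𝒴) → ℝ := inducedDist QYX n M C with hPdef
  have hout0 : ∀ y, 0 ≤ outDist QX QYX y := fun y =>
    Finset.sum_nonneg fun x _ => mul_nonneg (hQX0 x) (hQYX0 x y)
  have hQ0 : ∀ ys, 0 ≤ Q ys := fun ys =>
    Finset.prod_nonneg fun i _ => hout0 (ys i)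
  have hchan0 : ∀ xs ys, 0 ≤ chanProd QYX n xs ys := fun xs ys =>
    Finset.prod_nonneg fun i _ => hQYX0 (xs i) (ys i)
  -- total masses
  have hsumout : ∑ y, outDist QX QYX y = 1 := by
    simp only [outDist]
    rw [Finset.sum_comm]
    simp only [← Finset.mul_sum]
    rw [Finset.sum_congr rfl fun x _ => by rw [(hQYX x).2, mul_one]]
    exact hQX1
  have hsumQ : ∑ ys, Q ys = 1 := by
    simp only [hQdef, prodDist]
    rw [sum_pi_prod (fun _ y => outDist QX QYX y), hsumout]
    simp
  have hsumchan : ∀ xs, ∑ ys, chanProd QYX n xs ys = 1 := by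
    intro xs
    simp only [chanProd]
    rw [sum_pi_prod (fun i y => QYX (xs i) y)]
    rw [Finset.prod_congr rfl fun i _ => (hQYX (xs i)).2]
    simp
  have hsumP : ∑ ys, P ys = 1 := by
    simp only [hPdef, inducedDist]
    rw [← Finset.mul_sum, Finset.sum_comm]
    rw [Finset.sum_congr rfl fun m _ => hsumchan (C m)]
    simp
    field_simp
  -- TV identity
  have hTV : tvDist P Q = ∑ ys, max (P ys - Q ys) 0 := by
    have habs : ∀ a : ℝ, |a| = 2 * max a 0 - a := by
      intro a
      rcases le_total a 0 with h | h
      · rw [abs_of_nonpos h, max_eq_right h]; ring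
      · rw [abs_of_nonneg h, max_eq_left h]; ring
    simp only [tvDist]
    rw [Finset.sum_congr rfl fun ys _ => habs (P ys - Q ys)]
    rw [Finset.sum_sub_distrib, Finset.sum_sub_distrib, hsumP, hsumQ]
    rw [← Finset.mul_sum]
    ring
  rw [hTV]
  rw [← Finset.sum_add_distrib]
  apply Finset.sum_le_sum
  intro ys _
  -- split P into typical and atypical
  have hsplit : P ys = Ptyp QX QYX n M ε C ys + Patyp QX QYX n M ε C ys := by
    simp only [hPdef, inducedDist, Ptyp, Patyp, ← mul_add, ← Finset.sum_add_distrib]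
    congr 1
    apply Finset.sum_congr rfl
    intro m _
    by_cases h : JTypical QX QYX n ε (C m) ys <;> simp [h]
  have hPatyp0 : 0 ≤ Patyp QX QYX n M ε C ys := by
    apply mul_nonneg (by positivity)
    apply Finset.sum_nonneg
    intro m _
    split
    · exact hchan0 _ _
    · exact le_refl 0
  have key : max (Ptyp QX QYX n M ε C ys - Q ys) 0
      ≤ Q ys * max (Dtyp QX QYX n M ε C ys - 1) 0 := by
    rcases eq_or_lt_of_le (hQ0 ys) with hq | hq
    · -- Q ys = 0 : Ptyp = 0
      have hPt : Ptyp QX QYX n M ε C ys = 0 := by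
        have : ∃ i, outDist QX QYX (ys i) = 0 := by
          have := hq.symm
          rw [hQdef] at this
          simp only [prodDist] at this
          rcases Finset.prod_eq_zero_iff.mp this with ⟨i, _, hi⟩
          exact ⟨i, hi⟩
        obtain ⟨i, hi⟩ := this
        have hzero : ∀ m, chanProd QYX n (C m) ys = 0 := by
          intro m
          have hterm : QX (C m i) * QYX (C m i) (ys i) = 0 := by
            have := (Finset.sum_eq_zero_iff_of_nonneg
              (fun x _ => mul_nonneg (hQX0 x) (hQYX0 x (ys i)))).mp hi
            exact this (C m i) (Finset.mem_univ _)
          have : QYX (C m i) (ys i) = 0 := by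
            rcases mul_eq_zero.mp hterm with h | h
            · exact absurd h (ne_of_gt (hC m i))
            · exact h
          exact Finset.prod_eq_zero (Finset.mem_univ i) this
        simp only [Ptyp]
        rw [Finset.sum_eq_zero]
        · ring
        intro m _
        split
        · exact hzero m
        · rfl
      rw [hPt, ← hq]
      simp
    · -- Q ys > 0
      have hDt : Q ys * Dtyp QX QYX n M ε C ys = Ptyp QX QYX n M ε C ys := by
        simp only [Dtyp, Ptyp]
        rw [mul_left_comm]
        congr 1
        rw [Finset.mul_sum]
        apply Finset.sum_congr rfl
        intro m _
        split
        · rw [← hQdef, mul_comm, div_mul_cancel₀ _ hq.ne']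
        · rw [mul_zero]
      rw [mul_max_of_nonneg _ _ (hQ0 ys), mul_zero, mul_sub, mul_one, hDt]
  calc max (P ys - Q ys) 0
      = max (Ptyp QX QYX n M ε C ys - Q ys + Patyp QX QYX n M ε C ys) 0 := by
        rw [hsplit]; ring_nf
    _ ≤ max (Ptyp QX QYX n M ε C ys - Q ys) 0 + Patyp QX QYX n M ε C ys := by
        apply max_le
        · exact add_le_add (le_max_left _ _) le_rfl
        · positivity
    _ ≤ Q ys * max (Dtyp QX QYX n M ε C ys - 1) 0 + Patyp QX QYX n M ε C ys :=
        add_le_add key le_rfl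
end SoftCovering
end

section
/- For any ε > 0 and any α > 1, the probability under (X^n, Y^n) ~ Q_{X^n} Q_{Y^n|X^n} that (X^n, Y^n) lies outside the jointly typical set 𝒜_ε is at most 2^{−βn}, where β = (α − 1)(I(X;Y) + ε − d_α(Q_{X,Y}, Q_X Q_Y)). -/
open Finset Real
open scoped BigOperators Classical

noncomputable section SoftCovering

variable {𝒳 𝒴 : Type*} [Fintype 𝒳] [Fintype 𝒴]

lemma factor_eq' {𝒳 𝒴 : Type*} [Fintype 𝒳] [Fintype 𝒴]
    (QX : 𝒳 → ℝ) (QYX : 𝒳 → 𝒴 → ℝ) (hp : ∀ x, 0 ≤ QX x) (hW : ∀ x y, 0 ≤ QYX x y)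
    {a : ℝ} (ha : 1 < a) (x : 𝒳) (y : 𝒴) :
    QX x * QYX x y * (QYX x y / outDist QX QYX y) ^ (a - 1)
      = (QX x * QYX x y) ^ a * (QX x * outDist QX QYX y) ^ (1 - a) := by
  have ha1 : a ≠ 0 := by linarith
  have ha2 : (1:ℝ) - a ≠ 0 := by linarith
  have ho : 0 ≤ outDist QX QYX y := Finset.sum_nonneg fun x _ => mul_nonneg (hp x) (hW x y)
  rcases eq_or_lt_of_le (hp x) with hx | hx
  · simp [← hx, Real.zero_rpow ha1]
  rcases eq_or_lt_of_le ho with hoy | hoy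
  · have hWy : QYX x y = 0 := by
      have hle : QX x * QYX x y ≤ outDist QX QYX y :=
        Finset.single_le_sum (fun x' _ => mul_nonneg (hp x') (hW x' y)) (Finset.mem_univ x)
      nlinarith [hW x y]
    simp [hWy, ← hoy, Real.zero_rpow ha1, Real.zero_rpow ha2]
  rcases eq_or_lt_of_le (hW x y) with hw | hw
  · simp [← hw, Real.zero_rpow ha1]
  · rw [Real.mul_rpow hx.le hw.le, Real.mul_rpow hx.le hoy.le,
      Real.div_rpow (hW x y) hoy.le,
      show (1:ℝ) - a = -(a-1) by ring, Real.rpow_neg hx.le, Real.rpow_neg hoy.le]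
    have e1 : QX x ^ a * (QX x ^ (a-1))⁻¹ = QX x := by
      rw [← Real.rpow_neg hx.le, ← Real.rpow_add hx]
      norm_num
    have e2 : QYX x y * QYX x y ^ (a-1) = QYX x y ^ a := by
      have h := Real.rpow_add hw 1 (a-1)
      rw [Real.rpow_one] at h
      rw [← h]; norm_num
    have e1' : QX x * QX x ^ (a-1) = QX x ^ a := by
      have h := Real.rpow_add hx 1 (a-1)
      rw [Real.rpow_one] at h
      rw [← h]; norm_num
    field_simp
    rw [← e1', ← e2]; ring

/-- **Chernoff bound on the probability of atypicality (Eq. (19)-(20)).**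
For any `ε > 0` and `α > 1`, the probability under `(X^n,Y^n) ~ Q_{X^n} Q_{Y^n|X^n}`
of falling outside `𝒜_ε` is at most `2^{−βn}` with
`β = (α − 1)(I(X;Y) + ε − d_α(Q_{X,Y}, Q_X Q_Y))`. -/
theorem atypical_prob_le
    {𝒳 𝒴 : Type*} [Fintype 𝒳] [Fintype 𝒴]
    (QX : 𝒳 → ℝ) (QYX : 𝒳 → 𝒴 → ℝ) (hQX : IsPMF QX) (hQYX : ∀ x, IsPMF (QYX x))
    (n : ℕ) (ε : ℝ) (hε : 0 < ε) (a : ℝ) (ha : 1 < a)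
    (β : ℝ) (hβ : β = (a - 1) * (mutualInfo QX QYX + ε - renyiDiv QX QYX a)) :
    atypProb QX QYX n ε ≤ 2 ^ (-(β * n)) := by
  obtain ⟨hp0, hp1⟩ := hQX
  have hW0 : ∀ x y, 0 ≤ QYX x y := fun x y => (hQYX x).1 y
  have ho0 : ∀ y, 0 ≤ outDist QX QYX y := fun y =>
    Finset.sum_nonneg fun x _ => mul_nonneg (hp0 x) (hW0 x y)
  have ha1 : (0:ℝ) < a - 1 := by linarith
  set I := mutualInfo QX QYX with hIdef
  set o := outDist QX QYX with hodef
  set c := (I + ε) * n * (a - 1) with hcdef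
  set g : 𝒳 × 𝒴 → ℝ := fun z => QX z.1 * QYX z.1 z.2 * (QYX z.1 z.2 / o z.2) ^ (a - 1)
    with hgdef
  have hg0 : ∀ z, 0 ≤ g z := fun z =>
    mul_nonneg (mul_nonneg (hp0 _) (hW0 _ _))
      (Real.rpow_nonneg (div_nonneg (hW0 _ _) (ho0 _)) _)
  set S := ∑ z : 𝒳 × 𝒴, g z with hSdef
  have hS_eq : S = ∑ x, ∑ y, (QX x * QYX x y) ^ a * (QX x * o y) ^ (1 - a) := by
    rw [hSdef, Fintype.sum_prod_type]
    exact Finset.sum_congr rfl fun x _ => Finset.sum_congr rfl fun y _ =>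
      factor_eq' QX QYX hp0 hW0 ha x y
  have hS0 : 0 < S := by
    obtain ⟨x0, -, hx0⟩ : ∃ x ∈ Finset.univ, 0 < QX x := by
      by_contra h; push_neg at h
      have h0 : ∑ x, QX x = 0 := Finset.sum_eq_zero fun x hx => le_antisymm (h x hx) (hp0 x)
      rw [hp1] at h0; norm_num at h0
    obtain ⟨y0, -, hy0⟩ : ∃ y ∈ Finset.univ, 0 < QYX x0 y := by
      by_contra h; push_neg at h
      have h0 : ∑ y, QYX x0 y = 0 :=
        Finset.sum_eq_zero fun y hy => le_antisymm (h y hy) (hW0 x0 y)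
      rw [(hQYX x0).2] at h0; norm_num at h0
    have hoy : 0 < o y0 := lt_of_lt_of_le (mul_pos hx0 hy0)
      (Finset.single_le_sum (fun x _ => mul_nonneg (hp0 x) (hW0 x y0)) (Finset.mem_univ x0))
    have hgp : 0 < g (x0, y0) :=
      mul_pos (mul_pos hx0 hy0) (Real.rpow_pos_of_pos (div_pos hy0 hoy) _)
    exact Finset.sum_pos' (fun z _ => hg0 z) ⟨(x0, y0), Finset.mem_univ _, hgp⟩
  have hSd : S = 2 ^ ((a - 1) * renyiDiv QX QYX a) := by
    rw [renyiDiv, mul_inv_cancel_left₀ (ne_of_gt ha1), ← hodef, ← hS_eq]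
    exact (Real.rpow_logb (by norm_num) (by norm_num) hS0).symm
  have key : ∀ (xs : Fin n → 𝒳) (ys : Fin n → 𝒴),
      (if ¬ JTypical QX QYX n ε xs ys then prodDist QX n xs * chanProd QYX n xs ys else 0)
        ≤ (∏ i, g (xs i, ys i)) * (2:ℝ) ^ (-c) := by
    intro xs ys
    have hprod_eq : (∏ i, g (xs i, ys i))
        = prodDist QX n xs * chanProd QYX n xs ys *
          (chanProd QYX n xs ys / prodDist o n ys) ^ (a - 1) := by
      rw [hgdef]
      simp only
      rw [Finset.prod_mul_distrib,
        Real.finset_prod_rpow _ _ (fun i _ => div_nonneg (hW0 _ _) (ho0 _)),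
        Finset.prod_div_distrib]
      rw [prodDist, chanProd, prodDist, Finset.prod_mul_distrib]
    by_cases h : JTypical QX QYX n ε xs ys
    · rw [if_neg (not_not_intro h)]
      exact mul_nonneg (Finset.prod_nonneg fun i _ => hg0 _)
        (Real.rpow_nonneg (by norm_num) _)
    · rw [if_pos h]
      have hpd0 : 0 ≤ prodDist QX n xs := Finset.prod_nonneg fun i _ => hp0 _
      have hcp0 : 0 ≤ chanProd QYX n xs ys := Finset.prod_nonneg fun i _ => hW0 _ _
      rcases eq_or_lt_of_le (mul_nonneg hpd0 hcp0) with hj | hj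
      · rw [← hj]
        exact mul_nonneg (Finset.prod_nonneg fun i _ => hg0 _)
          (Real.rpow_nonneg (by norm_num) _)
      · have hpdne : prodDist QX n xs ≠ 0 := by
          intro he; rw [he, zero_mul] at hj; exact lt_irrefl 0 hj
        have hcpne : chanProd QYX n xs ys ≠ 0 := by
          intro he; rw [he, mul_zero] at hj; exact lt_irrefl 0 hj
        have hpx : ∀ i : Fin n, 0 < QX (xs i) := fun i =>
          lt_of_le_of_ne (hp0 _) (Ne.symm (Finset.prod_ne_zero_iff.mp hpdne i (Finset.mem_univ i)))
        have hwy : ∀ i : Fin n, 0 < QYX (xs i) (ys i) := fun i =>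
          lt_of_le_of_ne (hW0 _ _) (Ne.symm (Finset.prod_ne_zero_iff.mp hcpne i (Finset.mem_univ i)))
        have hoy : ∀ i : Fin n, 0 < o (ys i) := fun i =>
          lt_of_lt_of_le (mul_pos (hpx i) (hwy i))
            (Finset.single_le_sum (fun x _ => mul_nonneg (hp0 x) (hW0 x (ys i)))
              (Finset.mem_univ (xs i)))
        have hpo : 0 < prodDist o n ys := Finset.prod_pos fun i _ => hoy i
        have hcp : 0 < chanProd QYX n xs ys := lt_of_le_of_ne hcp0 (Ne.symm hcpne)
        have hr : 0 < chanProd QYX n xs ys / prodDist o n ys := div_pos hcp hpo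
        have hlb : (I + ε) * n ≤ Real.logb 2 (chanProd QYX n xs ys / prodDist o n ys) := by
          rcases Nat.eq_zero_or_pos n with hn | hn
          · subst hn
            simp [chanProd, prodDist]
          · rw [JTypical] at h
            push_neg at h
            have hn' : (0:ℝ) < n := by exact_mod_cast hn
            rw [inv_mul_eq_div, lt_div_iff₀ hn'] at h
            rw [hIdef]
            linarith
        have hge : (2:ℝ) ^ ((I + ε) * (n:ℝ))
            ≤ chanProd QYX n xs ys / prodDist o n ys := by
          calc (2:ℝ) ^ ((I + ε) * (n:ℝ))
              ≤ (2:ℝ) ^ Real.logb 2 (chanProd QYX n xs ys / prodDist o n ys) :=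
                (Real.rpow_le_rpow_left_iff (by norm_num)).mpr hlb
            _ = chanProd QYX n xs ys / prodDist o n ys :=
                Real.rpow_logb (by norm_num) (by norm_num) hr
        have hpow : (2:ℝ) ^ c ≤ (chanProd QYX n xs ys / prodDist o n ys) ^ (a - 1) := by
          calc (2:ℝ) ^ c = ((2:ℝ) ^ ((I + ε) * (n:ℝ))) ^ (a - 1) := by
                rw [← Real.rpow_mul (by norm_num), hcdef]
            _ ≤ (chanProd QYX n xs ys / prodDist o n ys) ^ (a - 1) :=
                Real.rpow_le_rpow (Real.rpow_nonneg (by norm_num) _) hge (le_of_lt ha1)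
        calc prodDist QX n xs * chanProd QYX n xs ys
            = prodDist QX n xs * chanProd QYX n xs ys * ((2:ℝ) ^ c * (2:ℝ) ^ (-c)) := by
              rw [← Real.rpow_add (by norm_num : (0:ℝ) < 2)]
              simp
          _ ≤ prodDist QX n xs * chanProd QYX n xs ys *
              ((chanProd QYX n xs ys / prodDist o n ys) ^ (a - 1) * (2:ℝ) ^ (-c)) := by
              apply mul_le_mul_of_nonneg_left _ (le_of_lt hj)
              exact mul_le_mul_of_nonneg_right hpow (Real.rpow_nonneg (by norm_num) _)
          _ = (∏ i, g (xs i, ys i)) * (2:ℝ) ^ (-c) := by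
              rw [hprod_eq]; ring
  have hsum : ∑ xs : Fin n → 𝒳, ∑ ys : Fin n → 𝒴, (∏ i, g (xs i, ys i)) = S ^ n := by
    have h1 : ∑ zs : Fin n → 𝒳 × 𝒴, ∏ i, g (zs i) = S ^ n := by
      have h2 := Finset.prod_univ_sum (fun _ : Fin n => (Finset.univ : Finset (𝒳 × 𝒴)))
        (fun _ z => g z)
      rw [Fintype.piFinset_univ] at h2
      rw [← h2, ← hSdef, Finset.prod_const, Finset.card_univ, Fintype.card_fin]
    rw [← h1,
      ← Equiv.sum_comp (Equiv.arrowProdEquivProdArrow (Fin n) (fun _ => 𝒳) (fun _ => 𝒴)).symm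
        (fun zs => ∏ i, g (zs i)), Fintype.sum_prod_type]
    rfl
  calc atypProb QX QYX n ε
      ≤ ∑ xs : Fin n → 𝒳, ∑ ys : Fin n → 𝒴, (∏ i, g (xs i, ys i)) * (2:ℝ) ^ (-c) := by
        rw [atypProb]
        exact Finset.sum_le_sum fun xs _ => Finset.sum_le_sum fun ys _ => key xs ys
    _ = (∑ xs : Fin n → 𝒳, ∑ ys : Fin n → 𝒴, ∏ i, g (xs i, ys i)) * (2:ℝ) ^ (-c) := by
        rw [Finset.sum_mul]
        exact Finset.sum_congr rfl fun xs _ => (Finset.sum_mul _ _ _).symm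
    _ = S ^ n * (2:ℝ) ^ (-c) := by rw [hsum]
    _ = 2 ^ (-(β * n)) := by
        rw [hSd, ← Real.rpow_natCast ((2:ℝ) ^ ((a - 1) * renyiDiv QX QYX a)) n,
          ← Real.rpow_mul (by norm_num), ← Real.rpow_add (by norm_num : (0:ℝ) < 2)]
        congr 1
        rw [hβ, hcdef]
        ring
end SoftCovering
end
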